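/- arXiv:0809.1201 — 6 statements merged into one kernel-verified Lean document; each statement's English description precedes it below -/
import Mathlib

section
/- Let f : X → Y be a localizing morphism of noetherian schemes. Then the following are equivalent: (i) f is set-theoretically injective; (ii) f is separated and the induced map from the set of generic points of X to the set of generic points of Y is injective. -/
/-! Formalization of a statement from "Compactification for essentially finite-type maps"
(S. Nayak). All schemes are noetherian where stated. -/

open AlgebraicGeometry CategoryTheory CategoryTheory.Limits TopologicalSpace Opposite

universe u

/-- A ring homomorphism `φ : A →+* B` is a localization homomorphism if it realizes `B` as a
localization of `A` at some multiplicative subset, with `φ` as the canonical map. -/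
def IsLocalizationHom {A B : Type u} [CommRing A] [CommRing B] (φ : A →+* B) : Prop :=
  ∃ M : Submonoid A, @IsLocalization A _ M B _ φ.toAlgebra

/-- A ring homomorphism `φ : A →+* B` is essentially of finite type if it realizes `B` as a
localization of a finitely generated `A`-algebra. -/
def IsEssFiniteTypeHom {A B : Type u} [CommRing A] [CommRing B] (φ : A →+* B) : Prop :=
  @Algebra.EssFiniteType A B _ _ φ.toAlgebra

/-- A morphism of schemes is localizing if every point `y` of the target has an affine open
neighborhood `V = Spec A` such that `f ⁻¹ V` is covered by finitely many affine opens
`Uᵢ = Spec Bᵢ` for which the induced ring homomorphisms `A →+* Bᵢ` are localization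
homomorphisms. -/
def IsLocalizingMorphism {X Y : Scheme.{u}} (f : X ⟶ Y) : Prop :=
  ∀ y : Y, ∃ V : Y.affineOpens, y ∈ V.1 ∧
    ∃ 𝒰 : Finset X.affineOpens,
      (∀ x : X, f.base x ∈ V.1 → ∃ U ∈ 𝒰, x ∈ U.1) ∧
      ∀ U ∈ 𝒰, ∃ hle : U.1 ≤ f ⁻¹ᵁ V.1, IsLocalizationHom (f.appLE V.1 U.1 hle).hom

/-- A localizing immersion is a localizing morphism that is set-theoretically injective. -/
def IsLocalizingImmersion {X Y : Scheme.{u}} (f : X ⟶ Y) : Prop :=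
  IsLocalizingMorphism f ∧ Function.Injective f.base

/-- A morphism of schemes is essentially of finite type if every point `y` of the target has an
affine open neighborhood `V = Spec A` such that `f ⁻¹ V` is covered by finitely many affine
opens `Uᵢ = Spec Bᵢ` for which the induced ring homomorphisms `A →+* Bᵢ` are essentially of
finite type. -/
def IsEssentiallyFiniteType {X Y : Scheme.{u}} (f : X ⟶ Y) : Prop :=
  ∀ y : Y, ∃ V : Y.affineOpens, y ∈ V.1 ∧
    ∃ 𝒰 : Finset X.affineOpens,
      (∀ x : X, f.base x ∈ V.1 → ∃ U ∈ 𝒰, x ∈ U.1) ∧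
      ∀ U ∈ 𝒰, ∃ hle : U.1 ≤ f ⁻¹ᵁ V.1, IsEssFiniteTypeHom (f.appLE V.1 U.1 hle).hom

/-- A generic point of a scheme: a point whose closure is an irreducible component. -/
def IsGenericPointOf (X : Scheme.{u}) (x : X) : Prop :=
  closure ({x} : Set X) ∈ irreducibleComponents X

namespace NayakAux

lemma stalkMap_isIso {X Y : Scheme.{u}} (f : X ⟶ Y)
    (hf : IsLocalizingMorphism f) (x : X) : IsIso (f.stalkMap x) := by
  obtain ⟨V, hfx, 𝒰, hcov, hloc⟩ := hf (f.base x)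
  obtain ⟨U, hU𝒰, hxU⟩ := hcov x hfx
  obtain ⟨hle, M, hM⟩ := hloc U hU𝒰
  letI : Algebra Γ(Y, V.1) Γ(X, U.1) := (f.appLE V.1 U.1 hle).hom.toAlgebra
  haveI hMB : IsLocalization M Γ(X, U.1) := hM
  letI : Algebra Γ(X, U.1) (X.presheaf.stalk x) :=
    TopCat.Presheaf.algebra_section_stalk X.presheaf ⟨x, hxU⟩
  letI : Algebra Γ(Y, V.1) (Y.presheaf.stalk (f.base x)) :=
    TopCat.Presheaf.algebra_section_stalk Y.presheaf ⟨f.base x, hfx⟩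
  letI : Algebra Γ(Y, V.1) (X.presheaf.stalk x) :=
    ((f.appLE V.1 U.1 hle) ≫ X.presheaf.germ U.1 x hxU).hom.toAlgebra
  haveI : IsScalarTower Γ(Y, V.1) Γ(X, U.1) (X.presheaf.stalk x) :=
    IsScalarTower.of_algebraMap_eq' rfl
  haveI hsx : IsLocalization.AtPrime (X.presheaf.stalk x) (U.2.primeIdealOf ⟨x, hxU⟩).asIdeal :=
    U.2.isLocalization_stalk ⟨x, hxU⟩
  haveI hsy : IsLocalization.AtPrime (Y.presheaf.stalk (f.base x))
      (V.2.primeIdealOf ⟨f.base x, hfx⟩).asIdeal :=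
    V.2.isLocalization_stalk ⟨f.base x, hfx⟩
  have e4 : (f.appLE V.1 U.1 hle) ≫ X.presheaf.germ U.1 x hxU
      = Y.presheaf.germ V.1 (f.base x) hfx ≫ f.stalkMap x := by
    rw [Scheme.Hom.germ_stalkMap f V.1 x hfx]
    show (f.app V.1 ≫ X.presheaf.map (homOfLE hle).op) ≫ X.presheaf.germ U.1 x hxU = _
    rw [Category.assoc, X.presheaf.germ_res (homOfLE hle) x hxU]
  have e4' : algebraMap Γ(Y, V.1) (X.presheaf.stalk x)
      = (f.stalkMap x).hom.comp (algebraMap Γ(Y, V.1) (Y.presheaf.stalk (f.base x))) := by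
    exact congrArg CommRingCat.Hom.hom e4
  haveI : (U.2.primeIdealOf ⟨x, hxU⟩).asIdeal.IsPrime := (U.2.primeIdealOf ⟨x, hxU⟩).2
  haveI h2 := IsLocalization.isLocalization_isLocalization_atPrime_isLocalization M
    (X.presheaf.stalk x) (U.2.primeIdealOf ⟨x, hxU⟩).asIdeal
  have h3 : ((U.2.primeIdealOf ⟨x, hxU⟩).asIdeal.comap
        (algebraMap Γ(Y, V.1) Γ(X, U.1)))
      = (V.2.primeIdealOf ⟨f.base x, hfx⟩).asIdeal := by
    have e1 : (IsLocalRing.maximalIdeal (X.presheaf.stalk x)).comap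
        (algebraMap Γ(X, U.1) (X.presheaf.stalk x)) = (U.2.primeIdealOf ⟨x, hxU⟩).asIdeal :=
      IsLocalization.AtPrime.comap_maximalIdeal _ _
    have e2 : (IsLocalRing.maximalIdeal (Y.presheaf.stalk (f.base x))).comap
        (algebraMap Γ(Y, V.1) (Y.presheaf.stalk (f.base x)))
        = (V.2.primeIdealOf ⟨f.base x, hfx⟩).asIdeal :=
      IsLocalization.AtPrime.comap_maximalIdeal _ _
    have e3 : (IsLocalRing.maximalIdeal (X.presheaf.stalk x)).comap (f.stalkMap x).hom
        = IsLocalRing.maximalIdeal (Y.presheaf.stalk (f.base x)) := by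
      ext a
      simp only [Ideal.mem_comap, IsLocalRing.mem_maximalIdeal, mem_nonunits_iff]
      exact not_congr (isUnit_map_iff (f.stalkMap x).hom a)
    calc (U.2.primeIdealOf ⟨x, hxU⟩).asIdeal.comap (algebraMap Γ(Y, V.1) Γ(X, U.1))
        = ((IsLocalRing.maximalIdeal (X.presheaf.stalk x)).comap
            (algebraMap Γ(X, U.1) (X.presheaf.stalk x))).comap
            (algebraMap Γ(Y, V.1) Γ(X, U.1)) := by rw [e1]
      _ = (IsLocalRing.maximalIdeal (X.presheaf.stalk x)).comap
            (algebraMap Γ(Y, V.1) (X.presheaf.stalk x)) := by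
            rw [Ideal.comap_comap, ← IsScalarTower.algebraMap_eq]
      _ = ((IsLocalRing.maximalIdeal (X.presheaf.stalk x)).comap (f.stalkMap x).hom).comap
            (algebraMap Γ(Y, V.1) (Y.presheaf.stalk (f.base x))) := by
            rw [e4', ← Ideal.comap_comap]
      _ = (IsLocalRing.maximalIdeal (Y.presheaf.stalk (f.base x))).comap
            (algebraMap Γ(Y, V.1) (Y.presheaf.stalk (f.base x))) := by rw [e3]
      _ = (V.2.primeIdealOf ⟨f.base x, hfx⟩).asIdeal := e2
  haveI h2' : IsLocalization
      ((V.2.primeIdealOf ⟨f.base x, hfx⟩).asIdeal).primeCompl (X.presheaf.stalk x) := by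
    have hpc : ((U.2.primeIdealOf ⟨x, hxU⟩).asIdeal.comap
        (algebraMap Γ(Y, V.1) Γ(X, U.1))).primeCompl
        = ((V.2.primeIdealOf ⟨f.base x, hfx⟩).asIdeal).primeCompl := by
      ext a
      show a ∉ _ ↔ a ∉ _
      rw [h3]
    rw [← hpc]
    exact h2
  let e := IsLocalization.algEquiv (R := Γ(Y, V.1))
    (V.2.primeIdealOf ⟨f.base x, hfx⟩).asIdeal.primeCompl
    (Y.presheaf.stalk (f.base x)) (X.presheaf.stalk x)
  have heq : f.stalkMap x = e.toRingEquiv.toCommRingCatIso.hom := by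
    apply CommRingCat.hom_ext
    apply IsLocalization.ringHom_ext (V.2.primeIdealOf ⟨f.base x, hfx⟩).asIdeal.primeCompl
    rw [← e4']
    exact (e.toAlgHom.comp_algebraMap).symm
  rw [heq]
  infer_instance

end NayakAux

lemma isGenericPointOf_iff {X : Scheme.{u}} (x : X) :
    IsGenericPointOf X x ↔ ∀ z : X, z ⤳ x → z = x := by
  constructor
  · intro hx z hz
    have h1 : closure ({x} : Set X) ⊆ closure {z} :=
      specializes_iff_closure_subset.mp hz
    have h2 : closure ({z} : Set X) ⊆ closure {x} :=
      hx.2 isIrreducible_singleton.closure h1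
    have : x ⤳ z := specializes_iff_closure_subset.mpr h2
    exact (hz.antisymm this).eq
  · intro h
    constructor
    · exact isIrreducible_singleton.closure
    · intro t ht hsub
      have ht' : IsIrreducible (closure t) := ht.closure
      have hgp := ht'.isGenericPoint_genericPoint_closure
      have hxt : x ∈ closure (closure t) := by
        rw [closure_closure]
        exact subset_closure (hsub (subset_closure rfl))
      rw [← hgp] at hxt
      have : ht'.genericPoint = x := h _ (specializes_iff_mem_closure.mpr hxt)
      calc t ⊆ closure t := subset_closure
        _ = closure {ht'.genericPoint} := by rw [hgp, closure_closure]
        _ = closure {x} := by rw [this]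

lemma exists_genericPoint_specializes {Y : Scheme.{u}} (y : Y) :
    ∃ η : Y, IsGenericPointOf Y η ∧ η ⤳ y := by
  have hirr : IsIrreducible (irreducibleComponent y) := isIrreducible_irreducibleComponent
  refine ⟨hirr.genericPoint, ?_, ?_⟩
  · unfold IsGenericPointOf
    rw [hirr.closure_genericPoint isClosed_irreducibleComponent]
    exact irreducibleComponent_mem_irreducibleComponents y
  · refine specializes_iff_mem_closure.mpr ?_
    rw [hirr.closure_genericPoint isClosed_irreducibleComponent]
    exact mem_irreducibleComponent

lemma isLocalHom_of_isIso' {R S : CommRingCat.{u}} (φ : R ⟶ S) [IsIso φ] : IsLocalHom φ.hom := by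
  exact isLocalHom_of_isIso φ

lemma spec_map_isIso {R S : CommRingCat.{u}} (φ : R ⟶ S) [IsIso φ] : IsIso (Spec.map φ) :=
  ⟨Spec.map (inv φ), by rw [← Spec.map_comp, IsIso.inv_hom_id, Spec.map_id],
    by rw [← Spec.map_comp, IsIso.hom_inv_id, Spec.map_id]⟩

lemma genericity {X Y : Scheme.{u}} (f : X ⟶ Y) {y : Y} {η : Y}
    (hη : ∀ w : Y, w ⤳ η → w = η)
    {x' : X} (ψ : X.presheaf.stalk x' ⟶ Y.presheaf.stalk y) [IsIso ψ]
    (hg : (Spec.map ψ ≫ X.fromSpecStalk x') ≫ f = Y.fromSpecStalk y)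
    {p : Spec (Y.presheaf.stalk y)} (hp : (Y.fromSpecStalk y).base p = η) :
    IsGenericPointOf X ((Spec.map ψ ≫ X.fromSpecStalk x').base p) := by
  haveI : IsIso (Spec.map ψ) := spec_map_isIso ψ
  set g := Spec.map ψ ≫ X.fromSpecStalk x' with hgdef
  have hFinj : Function.Injective (Y.fromSpecStalk y).base :=
    (Scheme.Hom.isEmbedding (Y.fromSpecStalk y)).injective
  have hsurj : Function.Surjective (Spec.map ψ).base := fun w =>
    ⟨(inv (Spec.map ψ)).base w, by rw [← Scheme.Hom.comp_apply, IsIso.inv_hom_id]; rfl⟩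
  have hrange : Set.range g.base = Set.range (X.fromSpecStalk x').base := by
    rw [hgdef, Scheme.Hom.comp_base, TopCat.coe_comp]
    exact hsurj.range_comp _
  have hfg : ∀ q, f.base (g.base q) = (Y.fromSpecStalk y).base q := fun q => by
    rw [← Scheme.Hom.comp_apply, hg]
  rw [isGenericPointOf_iff]
  intro z hz
  have h2 : f.base z ⤳ η := by
    have h := hz.map f.continuous
    rwa [hfg p, hp] at h
  have h3 : f.base z = η := hη _ h2
  have hgp : g.base p ⤳ x' := by
    have : g.base p ∈ Set.range (X.fromSpecStalk x').base := by
      rw [← hrange]; exact ⟨p, rfl⟩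
    rwa [Scheme.range_fromSpecStalk] at this
  have hzr : z ∈ Set.range g.base := by
    rw [hrange, Scheme.range_fromSpecStalk]
    exact hz.trans hgp
  obtain ⟨q, rfl⟩ := hzr
  have : (Y.fromSpecStalk y).base q = (Y.fromSpecStalk y).base p := by
    rw [← hfg q, h3, hp]
  rw [hFinj this]


/-- For a localizing morphism `f` of noetherian schemes, `f` is set-theoretically injective
iff `f` is separated and the induced map on generic points is injective. -/
theorem injective_iff_separated_and_injOn_genericPoints
    {X Y : Scheme.{u}} [IsNoetherian X] [IsNoetherian Y] (f : X ⟶ Y)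
    (hf : IsLocalizingMorphism f) :
    Function.Injective f.base ↔
      IsSeparated f ∧ Set.InjOn f.base {x : X | IsGenericPointOf X x} := by
  constructor
  · intro h
    exact ⟨isSeparated_of_injective f h, h.injOn⟩
  rintro ⟨hsep, hinj⟩ x₁ x₂ hx
  have hiso : ∀ z : X, IsIso (f.stalkMap z) := NayakAux.stalkMap_isIso f hf
  haveI := hiso x₁
  haveI := hiso x₂
  -- the two sections of `f` through `Spec 𝒪_{Y,y}`
  let ψ₁ : X.presheaf.stalk x₁ ⟶ Y.presheaf.stalk (f.base x₂) :=
    inv (f.stalkMap x₁) ≫ (Y.presheaf.stalkCongr (.of_eq hx)).hom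
  let ψ₂ : X.presheaf.stalk x₂ ⟶ Y.presheaf.stalk (f.base x₂) := inv (f.stalkMap x₂)
  haveI : IsIso ψ₁ := by dsimp only [ψ₁]; infer_instance
  haveI : IsIso ψ₂ := by dsimp only [ψ₂]; infer_instance
  haveI : IsLocalHom ψ₁.hom := isLocalHom_of_isIso' ψ₁
  haveI : IsLocalHom ψ₂.hom := isLocalHom_of_isIso' ψ₂
  haveI : IsIso (Spec.map ψ₁) := spec_map_isIso ψ₁
  haveI : IsIso (Spec.map ψ₂) := spec_map_isIso ψ₂
  let F : Spec (Y.presheaf.stalk (f.base x₂)) ⟶ Y := Y.fromSpecStalk (f.base x₂)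
  let g₁ : Spec (Y.presheaf.stalk (f.base x₂)) ⟶ X := Spec.map ψ₁ ≫ X.fromSpecStalk x₁
  let g₂ : Spec (Y.presheaf.stalk (f.base x₂)) ⟶ X := Spec.map ψ₂ ≫ X.fromSpecStalk x₂
  have hg₁ : g₁ ≫ f = F := by
    dsimp only [g₁, F]
    rw [Category.assoc, ← Scheme.SpecMap_stalkMap_fromSpecStalk f (x := x₁),
      ← Spec.map_comp_assoc]
    dsimp only [ψ₁]
    rw [IsIso.hom_inv_id_assoc, TopCat.Presheaf.stalkCongr_hom]
    exact Scheme.SpecMap_stalkSpecializes_fromSpecStalk _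
  have hg₂ : g₂ ≫ f = F := by
    dsimp only [g₂, F]
    rw [Category.assoc, ← Scheme.SpecMap_stalkMap_fromSpecStalk f (x := x₂),
      ← Spec.map_comp_assoc]
    dsimp only [ψ₂]
    rw [IsIso.hom_inv_id, Spec.map_id, Category.id_comp]
  have hc₁ : g₁.base (IsLocalRing.closedPoint _) = x₁ := by
    dsimp only [g₁]
    exact (Scheme.Hom.comp_apply _ _ _).trans ((congrArg (X.fromSpecStalk x₁).base Spec_closedPoint).trans Scheme.fromSpecStalk_closedPoint)
  have hc₂ : g₂.base (IsLocalRing.closedPoint _) = x₂ := by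
    dsimp only [g₂]
    exact (Scheme.Hom.comp_apply _ _ _).trans ((congrArg (X.fromSpecStalk x₂).base Spec_closedPoint).trans Scheme.fromSpecStalk_closedPoint)
  -- a generic point over y
  obtain ⟨η, hη, hηy⟩ := exists_genericPoint_specializes (Y := Y) (f.base x₂)
  have hη' : ∀ w : Y, w ⤳ η → w = η := (isGenericPointOf_iff η).mp hη
  obtain ⟨p, hp⟩ : ∃ p, F.base p = η := by
    have : η ∈ Set.range F.base := by
      dsimp only [F]; rw [Scheme.range_fromSpecStalk]; exact hηy
    exact this
  have hgen₁ : IsGenericPointOf X (g₁.base p) := genericity f hη' ψ₁ hg₁ hp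
  have hgen₂ : IsGenericPointOf X (g₂.base p) := genericity f hη' ψ₂ hg₂ hp
  have hfg₁ : ∀ q, f.base (g₁.base q) = F.base q := fun q => by
    rw [← Scheme.Hom.comp_apply, hg₁]
  have hfg₂ : ∀ q, f.base (g₂.base q) = F.base q := fun q => by
    rw [← Scheme.Hom.comp_apply, hg₂]
  have hξ : g₁.base p = g₂.base p := hinj hgen₁ hgen₂ (by rw [hfg₁, hfg₂])
  -- the equalizer argument
  let R := (Spec (Y.presheaf.stalk (f.base x₂))).presheaf.stalk p
  let ι : Spec R ⟶ Spec (Y.presheaf.stalk (f.base x₂)) := Scheme.fromSpecStalk _ p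
  have hι : ι.base (IsLocalRing.closedPoint R) = p := Scheme.fromSpecStalk_closedPoint
  have hb : (ι ≫ g₁).base (IsLocalRing.closedPoint R)
      = (ι ≫ g₂).base (IsLocalRing.closedPoint R) := by
    have e1 : (ι ≫ g₁).base (IsLocalRing.closedPoint R) = g₁.base p := by
      exact (Scheme.Hom.comp_apply _ _ _).trans (congrArg g₁.base hι)
    have e2 : (ι ≫ g₂).base (IsLocalRing.closedPoint R) = g₂.base p := by
      exact (Scheme.Hom.comp_apply _ _ _).trans (congrArg g₂.base hι)
    rw [e1, e2, hξ]
  have key : ∀ (a : Spec R ⟶ X) (ha : a ≫ f = ι ≫ F),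
      a.stalkMap (IsLocalRing.closedPoint R) =
        inv (f.stalkMap (a.base (IsLocalRing.closedPoint R))) ≫
        (Y.presheaf.stalkCongr (.of_eq (by exact (Scheme.Hom.comp_apply a f _).symm.trans (congrArg (fun h : Spec R ⟶ Y => h.base (IsLocalRing.closedPoint R)) ha)))).hom ≫
        (ι ≫ F).stalkMap (IsLocalRing.closedPoint R) := by
    intro a ha
    haveI := hiso (a.base (IsLocalRing.closedPoint R))
    have h1 := Scheme.Hom.stalkMap_congr_hom (a ≫ f) (ι ≫ F) ha (IsLocalRing.closedPoint R)
    rw [Scheme.Hom.stalkMap_comp a f (IsLocalRing.closedPoint R)] at h1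
    exact (IsIso.eq_inv_comp _).mpr h1
  have h1 : ι ≫ g₁ = ι ≫ g₂ := by
    apply (SpecToEquivOfLocalRing X R).injective
    apply SpecToEquivOfLocalRing_eq_iff.mpr
    refine ⟨hb, ?_⟩
    show Scheme.stalkClosedPointTo _ = _ ≫ Scheme.stalkClosedPointTo _
    rw [Scheme.stalkClosedPointTo, Scheme.stalkClosedPointTo]
    suffices hsuf : Scheme.Hom.stalkMap (ι ≫ g₁) (IsLocalRing.closedPoint R) =
        (X.presheaf.stalkCongr (.of_eq hb)).hom ≫
          Scheme.Hom.stalkMap (ι ≫ g₂) (IsLocalRing.closedPoint R) by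
      rw [hsuf, Category.assoc]
      rfl
    rw [key _ (by rw [Category.assoc, hg₁]), key _ (by rw [Category.assoc, hg₂])]
    haveI := hiso ((ι ≫ g₁).base (IsLocalRing.closedPoint R))
    haveI := hiso ((ι ≫ g₂).base (IsLocalRing.closedPoint R))
    rw [← cancel_epi (f.stalkMap ((ι ≫ g₁).base (IsLocalRing.closedPoint R))),
      IsIso.hom_inv_id_assoc, Scheme.Hom.stalkMap_congr_point_assoc f
        ((ι ≫ g₁).base (IsLocalRing.closedPoint R))
        ((ι ≫ g₂).base (IsLocalRing.closedPoint R)) hb,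
      IsIso.hom_inv_id_assoc]
    simp only [TopCat.Presheaf.stalkCongr_hom, TopCat.Presheaf.stalkSpecializes_comp,
      TopCat.Presheaf.stalkSpecializes_comp_assoc]
    exact (TopCat.Presheaf.stalkSpecializes_comp_assoc ..).symm
  -- over category equalizer
  let T' : Over Y := Over.mk F
  let XO : Over Y := Over.mk f
  haveI : IsSeparated XO.hom := hsep
  let G₁ : T' ⟶ XO := Over.homMk g₁ hg₁
  let G₂ : T' ⟶ XO := Over.homMk g₂ hg₂
  let W' : Over Y := Over.mk (ι ≫ F)
  let ιo : W' ⟶ T' := Over.homMk ι rfl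
  have hw : ιo ≫ G₁ = ιo ≫ G₂ := by
    apply Over.OverMorphism.ext
    exact h1
  haveI : IsClosedImmersion (equalizer.ι G₁ G₂).left :=
    isClosedImmersion_equalizer_ι_left G₁ G₂
  have hclosed : IsClosed (Set.range ((equalizer.ι G₁ G₂).left.base)) :=
    (IsClosedImmersion.base_closed (f := (equalizer.ι G₁ G₂).left)).isClosed_range
  have hp_mem : p ∈ Set.range ((equalizer.ι G₁ G₂).left.base) := by
    refine ⟨(equalizer.lift ιo hw).left.base (IsLocalRing.closedPoint R), ?_⟩
    exact (Scheme.Hom.comp_apply _ _ _).symm.trans ((congrArg (fun m : W' ⟶ T' => m.left.base (IsLocalRing.closedPoint R)) (equalizer.lift_ι ιo hw)).trans hι)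
  have hcp_mem : IsLocalRing.closedPoint (Y.presheaf.stalk (f.base x₂)) ∈
      Set.range ((equalizer.ι G₁ G₂).left.base) :=
    (IsLocalRing.specializes_closedPoint p).mem_closed hclosed hp_mem
  obtain ⟨w, hw'⟩ := hcp_mem
  have hfinal := congrArg (fun m : equalizer G₁ G₂ ⟶ XO => (m.left).base w) (equalizer.condition G₁ G₂)
  simp only [G₁, G₂, Over.comp_left, Over.homMk_left] at hfinal
  rw [Scheme.Hom.comp_apply, Scheme.Hom.comp_apply] at hfinal
  calc x₁ = g₁.base (IsLocalRing.closedPoint _) := hc₁.symm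
    _ = g₁.base ((equalizer.ι G₁ G₂).left.base w) :=
        (congrArg (fun t => g₁.base t) hw').symm
    _ = g₂.base ((equalizer.ι G₁ G₂).left.base w) := hfinal
    _ = g₂.base (IsLocalRing.closedPoint _) := congrArg (fun t => g₂.base t) hw'
    _ = x₂ := hc₂
end

section
/- If f : X → Y is a localizing immersion of noetherian schemes, then the image f(X) is stable under generization in Y (i.e., if y ∈ f(X) and y' specializes to y, then y' ∈ f(X)), and the natural map of ringed spaces induces an isomorphism of (X, O_X) onto the ringed space (f(X), O_Y|_{f(X)}) given by the subspace topology on f(X) and the restriction of the structure sheaf of Y. -/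
/-! Formalization of a statement from "Compactification for essentially finite-type maps"
(S. Nayak). All schemes are noetherian where stated. -/

open AlgebraicGeometry CategoryTheory CategoryTheory.Limits TopologicalSpace Opposite

universe u

lemma IsLocalizationHom.localRingHom_bijective {A B : Type u} [CommRing A] [CommRing B]
    {φ : A →+* B} (h : IsLocalizationHom φ) (q : Ideal B) [q.IsPrime] :
    Function.Bijective (Localization.localRingHom (q.comap φ) q φ rfl) := by
  obtain ⟨M, hM⟩ := h
  letI := φ.toAlgebra
  haveI : IsLocalization M B := hM
  haveI : IsLocalization.AtPrime (Localization.AtPrime q) (q.comap φ) :=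
    IsLocalization.isLocalization_isLocalization_atPrime_isLocalization M _ q
  have heq : Localization.localRingHom (q.comap φ) q φ rfl =
      ((IsLocalization.algEquiv (q.comap φ).primeCompl
        (Localization.AtPrime (q.comap φ)) (Localization.AtPrime q)) :
          Localization.AtPrime (q.comap φ) ≃ₐ[A] Localization.AtPrime q).toRingHom := by
    apply IsLocalization.ringHom_ext (q.comap φ).primeCompl
    ext x
    show Localization.localRingHom (q.comap φ) q φ rfl (algebraMap A _ x) = _
    rw [Localization.localRingHom_to_map]
    show _ = (IsLocalization.algEquiv (q.comap φ).primeCompl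
      (Localization.AtPrime (q.comap φ)) (Localization.AtPrime q)) ((algebraMap A _) x)
    rw [AlgEquiv.commutes, IsScalarTower.algebraMap_apply A B (Localization.AtPrime q)]
    rfl
  rw [heq]
  exact (IsLocalization.algEquiv (q.comap φ).primeCompl
    (Localization.AtPrime (q.comap φ)) (Localization.AtPrime q)).bijective

lemma isIso_stalkMap_Spec_map_of_isLocalizationHom {A B : CommRingCat.{u}} (φ : A ⟶ B)
    (h : IsLocalizationHom φ.hom) (q : PrimeSpectrum B) :
    IsIso ((Spec.map φ).stalkMap q) := by
  haveI := q.2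
  have : IsIso (CommRingCat.ofHom <| Localization.localRingHom
      (PrimeSpectrum.comap φ.hom q).asIdeal q.asIdeal φ.hom rfl) := by
    rw [ConcreteCategory.isIso_iff_bijective]
    exact h.localRingHom_bijective q.asIdeal
  rw [← Scheme.localRingHom_comp_stalkIso]
  exact IsIso.comp_isIso' (Iso.isIso_hom _) (IsIso.comp_isIso' this (Iso.isIso_inv _))

open TopologicalSpace in
lemma exists_specializes_of_mem_closure_image {α β : Type*} [TopologicalSpace α]
    [TopologicalSpace β] [NoetherianSpace α] [QuasiSober α] {f : α → β} (hf : Continuous f)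
    {O : Set α} (hO : IsOpen O) (Z : Closeds α) :
    ∀ {y : β}, y ∈ closure (f '' (O ∩ Z)) → ∃ ξ ∈ O ∩ (Z : Set α), y ∈ closure {f ξ} := by
  induction Z using WellFoundedLT.induction with
  | _ Z IH =>
  intro y hy
  have hCne : (O ∩ (Z : Set α)).Nonempty := by
    by_contra h
    rw [Set.not_nonempty_iff_eq_empty] at h
    rw [h, Set.image_empty, closure_empty] at hy
    exact hy
  by_cases hZC : closure (O ∩ (Z : Set α)) = (Z : Set α)
  · by_cases hirr : IsPreirreducible (Z : Set α)
    · have hZirr : IsIrreducible (Z : Set α) := ⟨hCne.mono Set.inter_subset_right, hirr⟩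
      have hgen : closure {hZirr.genericPoint} = (Z : Set α) :=
        hZirr.isGenericPoint_genericPoint Z.2
      set ζ := hZirr.genericPoint with hζ
      have hζZ : ζ ∈ (Z : Set α) := hgen ▸ subset_closure rfl
      have hζO : ζ ∈ O := by
        have h1 : (O ∩ closure {ζ}).Nonempty := by
          rw [hgen]; exact hCne
        have h2 : (closure (O ∩ {ζ})).Nonempty :=
          h1.mono (hO.inter_closure)
        obtain ⟨a, haO, ha⟩ := closure_nonempty_iff.mp h2
        exact ha ▸ haO
      refine ⟨ζ, ⟨hζO, hζZ⟩, ?_⟩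
      have hsub : f '' (O ∩ (Z : Set α)) ⊆ closure {f ζ} := by
        rintro b ⟨a, ha, rfl⟩
        have h3 : a ∈ closure {ζ} := hgen ▸ ha.2
        have h4 : f a ∈ f '' closure {ζ} := ⟨a, h3, rfl⟩
        have := (image_closure_subset_closure_image hf) h4
        rwa [Set.image_singleton] at this
      exact closure_minimal hsub isClosed_closure hy
    · rw [IsPreirreducible] at hirr
      push_neg at hirr
      obtain ⟨u, v, hu, hv, hZu, hZv, hZuv⟩ := hirr
      set Z₁ : Closeds α := ⟨(Z : Set α) \ u, Z.2.sdiff hu⟩ with hZ₁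
      set Z₂ : Closeds α := ⟨(Z : Set α) \ v, Z.2.sdiff hv⟩ with hZ₂
      have hlt₁ : Z₁ < Z := by
        refine lt_of_le_of_ne (fun a ha => ha.1) (fun h => ?_)
        obtain ⟨a, haZ, hau⟩ := hZu
        have : a ∈ (Z₁ : Set α) := by rw [h]; exact haZ
        exact this.2 hau
      have hlt₂ : Z₂ < Z := by
        refine lt_of_le_of_ne (fun a ha => ha.1) (fun h => ?_)
        obtain ⟨a, haZ, hav⟩ := hZv
        have : a ∈ (Z₂ : Set α) := by rw [h]; exact haZ
        exact this.2 hav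
      have hcover : O ∩ (Z : Set α) ⊆ (O ∩ (Z₁ : Set α)) ∪ (O ∩ (Z₂ : Set α)) := by
        rintro a ⟨haO, haZ⟩
        by_cases hau : a ∈ u
        · refine Or.inr ⟨haO, haZ, fun hav => ?_⟩
          have : a ∈ (Z : Set α) ∩ (u ∩ v) := ⟨haZ, hau, hav⟩
          rw [hZuv] at this
          exact this
        · exact Or.inl ⟨haO, haZ, hau⟩
      have hy' : y ∈ closure (f '' (O ∩ (Z₁ : Set α))) ∪ closure (f '' (O ∩ (Z₂ : Set α))) := by
        rw [← closure_union, ← Set.image_union]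
        exact closure_mono (Set.image_mono hcover) hy
      rcases hy' with h | h
      · obtain ⟨ξ, hξ, hyξ⟩ := IH Z₁ hlt₁ h
        exact ⟨ξ, ⟨hξ.1, hξ.2.1⟩, hyξ⟩
      · obtain ⟨ξ, hξ, hyξ⟩ := IH Z₂ hlt₂ h
        exact ⟨ξ, ⟨hξ.1, hξ.2.1⟩, hyξ⟩
  · set Z' : Closeds α := ⟨closure (O ∩ (Z : Set α)), isClosed_closure⟩ with hZ'
    have hle : (Z' : Set α) ⊆ (Z : Set α) := closure_minimal Set.inter_subset_right Z.2
    have hlt : Z' < Z := lt_of_le_of_ne (fun a ha => hle ha) (fun h => hZC (congrArg (fun W : Closeds α => (W : Set α)) h))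
    have heq : O ∩ (Z' : Set α) = O ∩ (Z : Set α) :=
      subset_antisymm (fun a ha => ⟨ha.1, hle ha.2⟩)
        (fun a ha => ⟨ha.1, subset_closure ha⟩)
    obtain ⟨ξ, hξ, hyξ⟩ := IH Z' hlt (by rw [heq]; exact hy)
    exact ⟨ξ, heq ▸ hξ, hyξ⟩

lemma localization_appLE_aux {X Y : Scheme.{u}} (f : X ⟶ Y) (V : Y.affineOpens)
    (U : X.affineOpens) (hle : U.1 ≤ f ⁻¹ᵁ V.1)
    (h : IsLocalizationHom (f.appLE V.1 U.1 hle).hom) :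
    (∀ x ∈ U.1, ∀ y' : Y, y' ⤳ f.base x → ∃ x' ∈ U.1, f.base x' = y' ∧ x' ⤳ x) ∧
    (∀ x ∈ U.1, IsIso (f.stalkMap x)) := by
  set φ := f.appLE V.1 U.1 hle with hφdef
  have E := IsAffineOpen.SpecMap_appLE_fromSpec f V.2 U.2 hle
  have hpt : ∀ q, V.2.fromSpec.base ((Spec.map φ).base q) = f.base (U.2.fromSpec.base q) := by
    intro q
    rw [← Scheme.Hom.comp_apply, E, Scheme.Hom.comp_apply]
  obtain ⟨M, hM⟩ := h
  letI : Algebra Γ(Y, V.1) Γ(X, U.1) := (φ.hom : Γ(Y, V.1) →+* Γ(X, U.1)).toAlgebra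
  haveI : IsLocalization M Γ(X, U.1) := hM
  have hcomap : ∀ q, (Spec.map φ).base q
      = PrimeSpectrum.comap (algebraMap Γ(Y, V.1) Γ(X, U.1)) q := fun _ => rfl
  constructor
  · intro x hx y' hy'
    obtain ⟨q, hq⟩ : ∃ q : PrimeSpectrum Γ(X, U.1), U.2.fromSpec.base q = x := by
      show x ∈ Set.range U.2.fromSpec.base
      rw [U.2.range_fromSpec]; exact hx
    have hfxV : f.base x ∈ V.1 := hle hx
    have hy'V : y' ∈ (V.1 : Set Y) := hy'.mem_open V.1.2 hfxV
    obtain ⟨p', hp'⟩ : ∃ p' : PrimeSpectrum Γ(Y, V.1), V.2.fromSpec.base p' = y' := by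
      show y' ∈ Set.range V.2.fromSpec.base
      rw [V.2.range_fromSpec]; exact hy'V
    have hVemb : Topology.IsInducing V.2.fromSpec.base :=
      (haveI := IsAffineOpen.isOpenImmersion_fromSpec V.2; V.2.fromSpec.isOpenEmbedding.toIsInducing)
    have h1 : p' ⤳ (Spec.map φ).base q := by
      refine hVemb.specializes_iff.mp ?_
      rw [hp']; erw [hpt]; rw [hq]; exact hy'
    have h2 : p' ≤ PrimeSpectrum.comap (algebraMap Γ(Y, V.1) Γ(X, U.1)) q :=
      (PrimeSpectrum.le_iff_specializes _ _).mpr ((hcomap q) ▸ h1)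
    have hrange := PrimeSpectrum.localization_comap_range Γ(X, U.1) M
    have hcq : (Spec.map φ).base q ∈
        Set.range (PrimeSpectrum.comap (algebraMap Γ(Y, V.1) Γ(X, U.1))) := ⟨q, (hcomap q).symm⟩
    rw [hrange] at hcq
    have hp'M : Disjoint (M : Set Γ(Y, V.1)) (p'.asIdeal : Set Γ(Y, V.1)) :=
      hcq.mono_right (SetLike.coe_subset_coe.mpr h2)
    obtain ⟨q', hq'⟩ : p' ∈
        Set.range (PrimeSpectrum.comap (algebraMap Γ(Y, V.1) Γ(X, U.1))) := by
      rw [hrange]; exact hp'M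
    have hcemb : Topology.IsInducing
        (PrimeSpectrum.comap (algebraMap Γ(Y, V.1) Γ(X, U.1))) :=
      (PrimeSpectrum.localization_comap_isEmbedding Γ(X, U.1) M).toIsInducing
    have h3 : q' ⤳ q := by
      refine hcemb.specializes_iff.mp ?_
      rw [hq', ← hcomap q]; exact h1
    refine ⟨U.2.fromSpec.base q', ?_, ?_, ?_⟩
    · show U.2.fromSpec.base q' ∈ (U.1 : Set X)
      rw [← U.2.range_fromSpec]; exact ⟨q', rfl⟩
    · rw [← hpt q', hcomap q', hq', hp']
    · have h4 := h3.map U.2.fromSpec.base.hom.continuous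
      rwa [hq] at h4
  · intro x hx
    obtain ⟨q, hq⟩ : ∃ q : PrimeSpectrum Γ(X, U.1), U.2.fromSpec.base q = x := by
      show x ∈ Set.range U.2.fromSpec.base
      rw [U.2.range_fromSpec]; exact hx
    subst hq
    haveI := isIso_stalkMap_Spec_map_of_isLocalizationHom φ ⟨M, hM⟩ q
    have h1 := Scheme.Hom.stalkMap_congr_hom _ _ E q
    replace h1 := (Scheme.Hom.stalkMap_comp (Spec.map φ) V.2.fromSpec q).symm.trans
      (h1.trans (congrArg (_ ≫ ·) (Scheme.Hom.stalkMap_comp U.2.fromSpec f q)))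
    haveI h3 : IsIso (f.stalkMap (U.2.fromSpec.base q) ≫ U.2.fromSpec.stalkMap q) :=
      haveI := IsAffineOpen.isOpenImmersion_fromSpec V.2
      have hVs := (IsOpenImmersion.iff_isIso_stalkMap.mp this).2 ((Spec.map φ) q)
      @IsIso.of_isIso_fac_left _ _ _ _ _ _ _ _ (Iso.isIso_hom _)
        (IsIso.comp_isIso' hVs ‹IsIso ((Spec.map φ).stalkMap q)›) h1.symm
    haveI := IsAffineOpen.isOpenImmersion_fromSpec U.2
    have hUs := (IsOpenImmersion.iff_isIso_stalkMap.mp this).2 q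
    exact @IsIso.of_isIso_comp_right _ _ _ _ _ _ (U.2.fromSpec.stalkMap q) hUs h3

private theorem isLocalizingImmersion_aux {X Y : Scheme.{u}} [IsNoetherian X] [IsNoetherian Y] (f : X ⟶ Y)
    (hf : IsLocalizingMorphism f ∧ Function.Injective f.base) :
    (∀ y ∈ Set.range f.base, ∀ y' : Y, y' ⤳ y → y' ∈ Set.range f.base) ∧
    Topology.IsEmbedding f.base ∧
    ∀ x : X, IsIso (f.stalkMap x) := by
  obtain ⟨hloc, hinj⟩ := hf
  have hgen : ∀ (x : X) (y' : Y), y' ⤳ f.base x → ∃ x', f.base x' = y' ∧ x' ⤳ x := by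
    intro x y' hy'
    obtain ⟨V, hyV, 𝒰, hcov, hU⟩ := hloc (f.base x)
    obtain ⟨U, hU𝒰, hxU⟩ := hcov x hyV
    obtain ⟨hle, hφ⟩ := hU U hU𝒰
    obtain ⟨x', _, hfx', hx'⟩ := (localization_appLE_aux f V U hle hφ).1 x hxU y' hy'
    exact ⟨x', hfx', hx'⟩
  refine ⟨?_, ⟨?_, hinj⟩, ?_⟩
  · rintro y ⟨x, rfl⟩ y' hy'
    obtain ⟨x', hx', -⟩ := hgen x y' hy'
    exact ⟨x', hx'⟩
  · rw [Topology.isInducing_iff_nhds]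
    intro x
    refine le_antisymm (Filter.tendsto_iff_comap.mp (f.base.hom.continuous.tendsto x)) ?_
    rw [Filter.le_def]
    intro N hN
    obtain ⟨N', hN'N, hN'open, hxN'⟩ := mem_nhds_iff.mp hN
    obtain ⟨V, hyV, 𝒰, hcov, hU⟩ := hloc (f.base x)
    set W : Set Y :=
      ↑V.1 ∩ ⋂ U ∈ (𝒰 : Set X.affineOpens), (closure (f.base '' (↑U.1 ∩ N'ᶜ)))ᶜ with hW
    have hWopen : IsOpen W :=
      V.1.2.inter (Set.Finite.isOpen_biInter 𝒰.finite_toSet fun U _ =>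
        isClosed_closure.isOpen_compl)
    have key : ∀ U : X.affineOpens, f.base x ∉ closure (f.base '' (↑U.1 ∩ N'ᶜ)) := by
      intro U hmem
      obtain ⟨ξ, hξ, hspec⟩ := exists_specializes_of_mem_closure_image
        f.base.hom.continuous U.1.2 ⟨N'ᶜ, hN'open.isClosed_compl⟩ hmem
      have hspec' : f.base ξ ⤳ f.base x := specializes_iff_mem_closure.mpr hspec
      obtain ⟨x'', hfx'', hx''⟩ := hgen x (f.base ξ) hspec'
      have hxξ : x'' = ξ := hinj hfx''
      subst hxξ
      exact hξ.2 (hx''.mem_open hN'open hxN')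
    have hfxW : f.base x ∈ W := by
      refine ⟨hyV, ?_⟩
      simp only [Set.mem_iInter, Set.mem_compl_iff]
      intro U _
      exact key U
    rw [Filter.mem_comap]
    refine ⟨W, hWopen.mem_nhds hfxW, ?_⟩
    intro z hz
    have hz1 : f.base z ∈ V.1 := hz.1
    obtain ⟨U, hUm, hzU⟩ := hcov z hz1
    have hz2 : f.base z ∉ closure (f.base '' (↑U.1 ∩ N'ᶜ)) := by
      have h5 := hz.2
      simp only [Set.mem_iInter, Set.mem_compl_iff] at h5
      exact h5 U hUm
    by_cases hzN' : z ∈ N'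
    · exact hN'N hzN'
    · have hmem : f.base z ∈ f.base '' (↑U.1 ∩ N'ᶜ) := ⟨z, ⟨hzU, hzN'⟩, rfl⟩
      exact absurd (subset_closure hmem) hz2
  · intro x
    obtain ⟨V, hyV, 𝒰, hcov, hU⟩ := hloc (f.base x)
    obtain ⟨U, hU𝒰, hxU⟩ := hcov x hyV
    obtain ⟨hle, hφ⟩ := hU U hU𝒰
    exact (localization_appLE_aux f V U hle hφ).2 x hxU

/-- The image of a localizing immersion is stable under generization, and `f` induces an
isomorphism of ringed spaces onto its image (equivalently: `f` is a topological embedding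
onto its image and all the stalk maps are isomorphisms). -/
theorem isLocalizingImmersion_image_stableUnderGenerization_and_ringedSpaceIso
    {X Y : Scheme.{u}} [IsNoetherian X] [IsNoetherian Y] (f : X ⟶ Y)
    (hf : IsLocalizingImmersion f) :
    (∀ y ∈ Set.range f.base, ∀ y' : Y, y' ⤳ y → y' ∈ Set.range f.base) ∧
    Topology.IsEmbedding f.base ∧
    ∀ x : X, IsIso (f.stalkMap x) :=
  isLocalizingImmersion_aux f hf
end

section
/- A localizing immersion of noetherian schemes that is a morphism of finite type is an open immersion. -/
/-! Formalization of a statement from "Compactification for essentially finite-type maps"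
(S. Nayak). All schemes are noetherian where stated. -/

open AlgebraicGeometry CategoryTheory CategoryTheory.Limits TopologicalSpace Opposite

universe u

theorem away_of_finiteType {A B : Type u} [CommRing A] [CommRing B] [IsNoetherianRing A]
    [Algebra A B] (M : Submonoid A) [IsLocalization M B] (h : Algebra.FiniteType A B) :
    ∃ g : A, IsLocalization.Away g B := by
  classical
  obtain ⟨s, hs⟩ := h.out
  choose p hd using fun b : {x // x ∈ s} => IsLocalization.surj M (b : B)
  set num : {x // x ∈ s} → A := fun b => (p b).1 with hnum
  set den : {x // x ∈ s} → M := fun b => (p b).2 with hden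
  set tM : M := ∏ b ∈ s.attach, den b with htM
  -- kernel killer
  obtain ⟨F, hF⟩ : (RingHom.ker (algebraMap A B)).FG := IsNoetherian.noetherian _
  have hker : ∀ a ∈ F, ∃ m : M, (m : A) * a = 0 := by
    intro a ha
    have : algebraMap A B a = 0 := by
      have : a ∈ RingHom.ker (algebraMap A B) := hF ▸ Ideal.subset_span ha
      simpa [RingHom.mem_ker] using this
    exact (IsLocalization.map_eq_zero_iff M B a).mp this
  choose killer hkiller using fun a : {x // x ∈ F} => hker a a.2
  set sM : M := ∏ a ∈ F.attach, killer a with hsM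
  have hspan : ∀ a ∈ Ideal.span (F : Set A), (sM : A) * a = 0 := by
    intro a haI
    induction haI using Submodule.span_induction with
    | mem x hx =>
      have : (sM : A) = (killer ⟨x, hx⟩ : A) * ∏ a ∈ F.attach.erase ⟨x, hx⟩, (killer a : A) := by
        rw [hsM, ← Finset.mul_prod_erase F.attach _ (Finset.mem_attach _ ⟨x, hx⟩)]
        push_cast
        rfl
      rw [this, mul_assoc, mul_comm, mul_assoc, mul_comm x, hkiller ⟨x, hx⟩, mul_zero]
    | zero => simp
    | add x y _ _ hx hy => rw [mul_add, hx, hy, add_zero]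
    | smul r x _ hx => rw [smul_eq_mul, mul_left_comm, hx, mul_zero]
  have hskill : ∀ a : A, algebraMap A B a = 0 → (sM : A) * a = 0 := fun a ha =>
    hspan a (by rw [hF]; simpa [RingHom.mem_ker] using ha)
  set gM : M := tM * sM with hgM
  refine ⟨(gM : A), ?_, ?_, ?_⟩
  · rintro ⟨y, n, rfl⟩
    simp only [map_pow]
    exact (IsLocalization.map_units B gM).pow n
  · -- surjectivity
    intro z
    have hz : z ∈ Algebra.adjoin A (s : Set B) := hs ▸ Algebra.mem_top
    have key : ∃ (n : ℕ) (a : A), z * algebraMap A B ((gM : A) ^ n) = algebraMap A B a := by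
      induction hz using Algebra.adjoin_induction with
      | mem b hb =>
        refine ⟨1, num ⟨b, hb⟩ * (∏ c ∈ s.attach.erase ⟨b, hb⟩, (den c : A)) * (sM : A), ?_⟩
        have ht : (tM : A) = (den ⟨b, hb⟩ : A) * ∏ c ∈ s.attach.erase ⟨b, hb⟩, (den c : A) := by
          rw [htM, ← Finset.mul_prod_erase s.attach _ (Finset.mem_attach _ ⟨b, hb⟩)]
          push_cast
          rfl
        have hgg : ((gM : A) : A) = (tM : A) * (sM : A) := by rw [hgM]; push_cast; ring
        rw [pow_one, hgg, ht, map_mul, map_mul, map_mul, map_mul, ← mul_assoc, ← mul_assoc,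
          hd ⟨b, hb⟩]
      | algebraMap r => exact ⟨0, r, by simp⟩
      | add x y _ _ hx hy =>
        obtain ⟨n1, a1, e1⟩ := hx
        obtain ⟨n2, a2, e2⟩ := hy
        refine ⟨n1 + n2, a1 * (gM : A) ^ n2 + a2 * (gM : A) ^ n1, ?_⟩
        rw [pow_add, map_mul, map_add, map_mul, map_mul, ← e1, ← e2]
        ring
      | mul x y _ _ hx hy =>
        obtain ⟨n1, a1, e1⟩ := hx
        obtain ⟨n2, a2, e2⟩ := hy
        refine ⟨n1 + n2, a1 * a2, ?_⟩
        rw [pow_add, map_mul, map_mul, ← e1, ← e2]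
        ring
    obtain ⟨n, a, e⟩ := key
    exact ⟨⟨a, ⟨(gM : A) ^ n, n, rfl⟩⟩, e⟩
  · -- exists_of_eq
    intro x y hxy
    refine ⟨⟨(gM : A), 1, pow_one _⟩, ?_⟩
    have : algebraMap A B (x - y) = 0 := by rw [map_sub, hxy, sub_self]
    have h0 : (sM : A) * (x - y) = 0 := hskill _ this
    have hgg : (gM : A) = (tM : A) * (sM : A) := by rw [hgM]; push_cast; ring
    show (gM : A) * x = (gM : A) * y
    rw [hgg]
    linear_combination (tM : A) * h0

theorem isOpenImmersion_resLE {X Y : Scheme.{u}} (f : X ⟶ Y) (U : X.affineOpens)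
    (V : Y.affineOpens) (e : U.1 ≤ f ⁻¹ᵁ V.1)
    (hloc : IsLocalizationHom (f.appLE V.1 U.1 e).hom)
    (hN : IsNoetherianRing Γ(Y, V.1)) (hft : RingHom.FiniteType (f.appLE V.1 U.1 e).hom) :
    IsOpenImmersion (f.resLE V.1 U.1 e) := by
  haveI : IsAffine V.1.toScheme := V.2
  haveI : IsAffine U.1.toScheme := U.2
  set φ : Γ(Y, V.1) →+* Γ(X, U.1) := (f.appLE V.1 U.1 e).hom with hφ
  letI : Algebra Γ(Y, V.1) Γ(X, U.1) := φ.toAlgebra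
  obtain ⟨M, hM⟩ := hloc
  haveI : IsLocalization M Γ(X, U.1) := hM
  obtain ⟨g, hg⟩ := away_of_finiteType M hft
  haveI := hg
  have h1 : IsOpenImmersion (Spec.map (CommRingCat.ofHom (algebraMap Γ(Y, V.1) Γ(X, U.1)))) :=
    AlgebraicGeometry.IsOpenImmersion.of_isLocalization g
  have h2 : IsOpenImmersion (Spec.map (f.appLE V.1 U.1 e)) := h1
  -- appTop of resLE
  set r := f.resLE V.1 U.1 e with hr
  let i := arrowResLEAppIso f V.1 U.1 e
  have hw : i.hom.left ≫ f.appLE V.1 U.1 e = r.appTop ≫ i.hom.right := i.hom.w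
  have hAppTop : r.appTop = i.hom.left ≫ f.appLE V.1 U.1 e ≫ inv i.hom.right := by
    rw [← Category.assoc, hw, Category.assoc, IsIso.hom_inv_id, Category.comp_id]
  have h3 : IsOpenImmersion (Spec.map r.appTop) := by
    rw [hAppTop, Spec.map_comp, Spec.map_comp]
    infer_instance
  have h4 : r = U.1.toScheme.isoSpec.hom ≫ Spec.map r.appTop ≫ V.1.toScheme.isoSpec.inv := by
    rw [Scheme.isoSpec_inv_naturality, Iso.hom_inv_id_assoc]
  rw [h4]
  infer_instance

/-- A localizing immersion of noetherian schemes that is of finite type is an open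
immersion. -/
theorem isOpenImmersion_of_isLocalizingImmersion_of_finiteType
    {X Y : Scheme.{u}} [IsNoetherian X] [IsNoetherian Y] (f : X ⟶ Y)
    (hf : IsLocalizingImmersion f)
    (hft : LocallyOfFiniteType f) (hqc : QuasiCompact f) :
    IsOpenImmersion f := by
  have H : ∀ x : X, ∃ U : X.Opens, x ∈ U ∧ IsOpenImmersion (U.ι ≫ f) := by
    intro x
    obtain ⟨V, hV, 𝒰, hcov, hprop⟩ := hf.1 (f.base x)
    obtain ⟨U, hU𝒰, hxU⟩ := hcov x hV
    obtain ⟨hle, hloc⟩ := hprop U hU𝒰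
    have hN : IsNoetherianRing Γ(Y, V.1) := IsLocallyNoetherian.component_noetherian V
    have hftU : RingHom.FiniteType (f.appLE V.1 U.1 hle).hom :=
      HasRingHomProperty.appLE (P := @LocallyOfFiniteType) f hft V U hle
    have hres := isOpenImmersion_resLE f U V hle hloc hN hftU
    refine ⟨U.1, hxU, ?_⟩
    rw [← Scheme.Hom.resLE_comp_ι f hle]
    exact @IsOpenImmersion.comp _ _ _ _ _ hres inferInstance
  rw [isOpenImmersion_iff_stalk]
  constructor
  · refine Topology.IsOpenEmbedding.of_continuous_injective_isOpenMap
      f.base.hom.continuous hf.2 ?_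
    intro W hW
    rw [isOpen_iff_forall_mem_open]
    rintro _ ⟨x, hxW, rfl⟩
    obtain ⟨U, hxU, hOI⟩ := H x
    have hpre : IsOpen (U.ι.base ⁻¹' W) := hW.preimage U.ι.base.hom.continuous
    have hopen : IsOpen ((U.ι ≫ f).base '' (U.ι.base ⁻¹' W)) :=
      hOI.base_open.isOpenMap _ hpre
    have himg : (U.ι ≫ f).base '' (U.ι.base ⁻¹' W) =
        f.base '' (U.ι.base '' (U.ι.base ⁻¹' W)) := by
      rw [Scheme.Hom.comp_base]
      exact Set.image_comp (⇑f) (⇑U.ι) _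
    refine ⟨f.base '' (U.ι.base '' (U.ι.base ⁻¹' W)), ?_, himg ▸ hopen, ?_⟩
    · exact Set.image_mono (by
        rw [Set.image_preimage_eq_inter_range]; exact Set.inter_subset_left)
    · exact ⟨x, ⟨⟨x, hxU⟩, hxW, rfl⟩, rfl⟩
  · intro x
    obtain ⟨U, hxU, hOI⟩ := H x
    haveI := hOI
    have h1 : IsIso ((U.ι ≫ f).stalkMap (show U.toScheme from ⟨x, hxU⟩)) := inferInstance
    rw [Scheme.Hom.stalkMap_comp] at h1
    haveI : IsIso (U.ι.stalkMap (show U.toScheme from ⟨x, hxU⟩)) := inferInstance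
    exact @IsIso.of_isIso_comp_right _ _ _ _ _
      (f.stalkMap (U.ι.base (show U.toScheme from ⟨x, hxU⟩))) (U.ι.stalkMap (show U.toScheme from ⟨x, hxU⟩)) _ h1
end

section
/- A surjective localizing immersion of noetherian schemes is an isomorphism. More generally, if f : X → Y is a localizing immersion of noetherian schemes whose image f(X) is a closed subset of Y, then f is an isomorphism of X onto an open and closed subscheme of Y (a union of connected components of Y). -/
/-! Formalization of a statement from "Compactification for essentially finite-type maps"
(S. Nayak). All schemes are noetherian where stated. -/

open AlgebraicGeometry CategoryTheory CategoryTheory.Limits TopologicalSpace Opposite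

universe u

/-! ### Auxiliary topological lemmas -/

/-- In a noetherian sober space, every point `w` of the closure of a set `S` admits a
generization `η` which is the generic point of an irreducible closed set in which `S` is
dense. -/
lemma exists_generization_of_mem_closure {Y : Type*} [TopologicalSpace Y]
    [NoetherianSpace Y] [QuasiSober Y] (S : Set Y) {w : Y} (hw : w ∈ closure S) :
    ∃ η : Y, η ⤳ w ∧ η ∈ closure (S ∩ closure {η}) := by
  -- consider the family of closed sets `F` containing `w` with `S ∩ F` dense in `F`
  set 𝒞 : Set (Closeds Y) := {F | w ∈ (F : Set Y) ∧ (F : Set Y) = closure (S ∩ F)} with h𝒞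
  have h0 : (⟨closure S, isClosed_closure⟩ : Closeds Y) ∈ 𝒞 := by
    refine ⟨hw, ?_⟩
    simp only [Closeds.coe_mk]
    rw [Set.inter_eq_left.mpr subset_closure]
  obtain ⟨F, hF, hFmin⟩ := (wellFounded_lt (α := Closeds Y)).has_min 𝒞 ⟨_, h0⟩
  obtain ⟨hwF, hFdense⟩ := hF
  -- `F` is irreducible
  have hkey : ∀ A : Set Y, IsClosed A → A ⊆ (F : Set Y) → w ∈ closure (S ∩ A) →
      closure (S ∩ A) = (F : Set Y) := by
    intro A hA hAF hwA
    have hsub : closure (S ∩ A) ⊆ (F : Set Y) :=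
      closure_minimal (fun y hy => hAF hy.2) F.2
    have hmem : (⟨closure (S ∩ A), isClosed_closure⟩ : Closeds Y) ∈ 𝒞 := by
      refine ⟨hwA, ?_⟩
      simp only [Closeds.coe_mk]
      apply subset_antisymm
      · exact closure_mono fun y hy => ⟨hy.1, subset_closure hy⟩
      · exact closure_minimal Set.inter_subset_right isClosed_closure
    have hle : (⟨closure (S ∩ A), isClosed_closure⟩ : Closeds Y) ≤ F := hsub
    rcases eq_or_lt_of_le hle with heq | hlt
    · exact congrArg SetLike.coe heq
    · exact absurd hlt (hFmin _ hmem)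
  have hirr : IsIrreducible (F : Set Y) := by
    constructor
    · exact ⟨w, hwF⟩
    · rw [isPreirreducible_iff_isClosed_union_isClosed]
      intro A B hA hB hFAB
      by_contra hcon
      push_neg at hcon
      obtain ⟨hnA, hnB⟩ := hcon
      have hdec : S ∩ (F : Set Y) ⊆ (S ∩ ((F : Set Y) ∩ A)) ∪ (S ∩ ((F : Set Y) ∩ B)) := by
        rintro y ⟨hyS, hyF⟩
        rcases hFAB hyF with h | h
        · exact Or.inl ⟨hyS, hyF, h⟩
        · exact Or.inr ⟨hyS, hyF, h⟩
      have hwmem : w ∈ closure (S ∩ ((F : Set Y) ∩ A)) ∪ closure (S ∩ ((F : Set Y) ∩ B)) := by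
        have : w ∈ closure ((S ∩ ((F : Set Y) ∩ A)) ∪ (S ∩ ((F : Set Y) ∩ B))) := by
          have : w ∈ closure (S ∩ (F : Set Y)) := hFdense ▸ hwF
          exact closure_mono hdec this
        rwa [closure_union] at this
      rcases hwmem with h | h
      · have := hkey ((F : Set Y) ∩ A) (F.2.inter hA) Set.inter_subset_left h
        have hFA : (F : Set Y) ⊆ A := by
          rw [← this]
          exact closure_minimal (fun y hy => hy.2.2) hA
        exact hnA hFA
      · have := hkey ((F : Set Y) ∩ B) (F.2.inter hB) Set.inter_subset_left h
        have hFB : (F : Set Y) ⊆ B := by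
          rw [← this]
          exact closure_minimal (fun y hy => hy.2.2) hB
        exact hnB hFB
  obtain ⟨η, hη⟩ := QuasiSober.sober hirr F.2
  refine ⟨η, ?_, ?_⟩
  · exact specializes_iff_mem_closure.mpr (by rw [hη.def]; exact hwF)
  · rw [hη.def, ← hFdense]
    exact hη.mem

/-- In a noetherian sober space, a closed set which is stable under generalization is open. -/
lemma isOpen_of_isClosed_stableUnderGeneralization {Y : Type*} [TopologicalSpace Y]
    [NoetherianSpace Y] [QuasiSober Y] {S : Set Y} (hc : IsClosed S)
    (hg : StableUnderGeneralization S) : IsOpen S := by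
  rw [← isClosed_compl_iff]
  rw [← closure_subset_iff_isClosed]
  intro w hw
  obtain ⟨η, hηw, hηcl⟩ := exists_generization_of_mem_closure Sᶜ hw
  by_contra hwS
  have hηS : η ∈ S := hg hηw (not_not.mp hwS)
  have hclS : closure ({η} : Set Y) ⊆ S :=
    closure_minimal (Set.singleton_subset_iff.mpr hηS) hc
  have hne : (Sᶜ ∩ closure ({η} : Set Y)).Nonempty :=
    closure_nonempty_iff.mp ⟨η, hηcl⟩
  obtain ⟨ξ, hξ1, hξ2⟩ := hne
  exact hξ1 (hclS hξ2)

/-- The key facts about a chart of a localizing morphism: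
the image of `U` is an intersection of a nonempty family of open sets, images of closed sets
of `U` are traces of closed sets on the image of `U`, and specialization is reflected. -/
lemma chart_facts {X Y : Scheme.{u}} (f : X ⟶ Y) (U : X.affineOpens)
    (V : Y.affineOpens) (hle : U.1 ≤ f ⁻¹ᵁ V.1)
    (hloc : IsLocalizationHom (f.appLE V.1 U.1 hle).hom) :
    (∃ (ι : Type u) (_ : Nonempty ι) (O : ι → Set Y),
        (∀ i, IsOpen (O i)) ∧ f.base '' U.1 = ⋂ i, O i) ∧
    (∀ Z : Set X, IsClosed Z →
        ∃ C : Set Y, IsClosed C ∧ f.base '' (Z ∩ U.1) = C ∩ f.base '' U.1) ∧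
    (∀ z x' : X, z ∈ U.1 → x' ∈ U.1 → f.base z ⤳ f.base x' → z ⤳ x') := by
  obtain ⟨M, hM⟩ := hloc
  letI : Algebra Γ(Y, V.1) Γ(X, U.1) := (f.appLE V.1 U.1 hle).hom.toAlgebra
  haveI : IsLocalization M Γ(X, U.1) := hM
  have hdiag : Spec.map (f.appLE V.1 U.1 hle) ≫ V.2.fromSpec = U.2.fromSpec ≫ f :=
    IsAffineOpen.SpecMap_appLE_fromSpec f V.2 U.2 hle
  set eU : Spec Γ(X, U.1) → X := ⇑U.2.fromSpec.base with heU
  set eV : Spec Γ(Y, V.1) → Y := ⇑V.2.fromSpec.base with heV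
  set c : Spec Γ(X, U.1) → Spec Γ(Y, V.1) := ⇑(Spec.map (f.appLE V.1 U.1 hle)).base with hc
  have hbase : ∀ p, eV (c p) = f.base (eU p) := fun p => by
    rw [heV, heU, hc, ← Scheme.Hom.comp_apply, hdiag, Scheme.Hom.comp_apply]
  haveI := V.2.isOpenImmersion_fromSpec
  haveI := U.2.isOpenImmersion_fromSpec
  have hembV : Topology.IsOpenEmbedding eV := V.2.fromSpec.isOpenEmbedding
  have hembU : Topology.IsOpenEmbedding eU := U.2.fromSpec.isOpenEmbedding
  have hembc : Topology.IsEmbedding c :=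
    PrimeSpectrum.localization_comap_isEmbedding (R := Γ(Y, V.1)) Γ(X, U.1) M
  have hrangeU : Set.range eU = (U.1 : Set X) := IsAffineOpen.range_fromSpec U.2
  have hrangec : Set.range c =
      ⋂ (s : M), (PrimeSpectrum.zeroLocus {(s : Γ(Y, V.1))})ᶜ := by
    have h1 : Set.range c = { p | Disjoint (M : Set Γ(Y, V.1)) p.asIdeal } :=
      PrimeSpectrum.localization_comap_range Γ(X, U.1) M
    rw [h1]
    ext p
    simp only [Set.mem_setOf_eq, Set.disjoint_left, SetLike.mem_coe, Set.mem_iInter,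
      Set.mem_compl_iff, Subtype.forall]
    erw [Set.mem_iInter]
    simp only [Set.mem_compl_iff, Subtype.forall]
    exact ⟨fun h a ha hz => h ha (Set.singleton_subset_iff.mp
        ((PrimeSpectrum.mem_zeroLocus _ _).mp hz)),
      fun h a ha haz => h a ha ((PrimeSpectrum.mem_zeroLocus _ _).mpr
        (Set.singleton_subset_iff.mpr haz))⟩
  have him : f.base '' (U.1 : Set X) = eV '' (Set.range c) := by
    rw [← hrangeU, ← Set.range_comp]
    have : f.base ∘ eU = eV ∘ c := funext fun p => (hbase p).symm
    rw [this, Set.range_comp]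
  refine ⟨?_, ?_, ?_⟩
  · refine ⟨M, ⟨⟨1, M.one_mem⟩⟩, fun s => eV '' (PrimeSpectrum.zeroLocus {(s : Γ(Y, V.1))})ᶜ,
      fun s => hembV.isOpenMap _ (PrimeSpectrum.isClosed_zeroLocus _).isOpen_compl, ?_⟩
    rw [him, hrangec]
    exact (hembV.injective.injOn).image_iInter_eq
  · intro Z hZ
    have h1 : Z ∩ (U.1 : Set X) = eU '' (eU ⁻¹' Z) := by
      rw [Set.image_preimage_eq_inter_range, hrangeU]
    have h2 : f.base '' (Z ∩ (U.1 : Set X)) = eV '' (c '' (eU ⁻¹' Z)) := by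
      rw [h1, ← Set.image_comp]
      have : f.base ∘ eU = eV ∘ c := funext fun p => (hbase p).symm
      rw [this, Set.image_comp]
    obtain ⟨C₀, hC₀closed, hC₀⟩ : ∃ C₀, IsClosed C₀ ∧ c ⁻¹' C₀ = eU ⁻¹' Z :=
      (hembc.toIsInducing.isClosed_iff).mp (hZ.preimage U.2.fromSpec.base.hom.continuous)
    refine ⟨closure (eV '' C₀), isClosed_closure, ?_⟩
    rw [h2, ← hC₀, Set.image_preimage_eq_inter_range,
      Set.image_inter hembV.injective, ← him]
    apply Set.ext
    intro y
    constructor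
    · rintro ⟨h4, h5⟩
      exact ⟨subset_closure h4, h5⟩
    · rintro ⟨h4, h5⟩
      have h6 : y ∈ Set.range eV := by
        rw [him] at h5
        exact Set.image_subset_range _ _ h5
      obtain ⟨p, rfl⟩ := h6
      have h7 : p ∈ closure C₀ := by
        rw [hembV.toIsEmbedding.closure_eq_preimage_closure_image C₀]
        exact h4
      rw [hC₀closed.closure_eq] at h7
      exact ⟨Set.mem_image_of_mem _ h7, h5⟩
  · intro z x' hz hx' hspec
    obtain ⟨a, rfl⟩ : z ∈ Set.range eU := hrangeU ▸ hz
    obtain ⟨b, rfl⟩ : x' ∈ Set.range eU := hrangeU ▸ hx'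
    rw [← hbase a, ← hbase b] at hspec
    have h1 : c a ⤳ c b := (hembV.toIsInducing.specializes_iff).mp hspec
    have h2 : a ⤳ b := (hembc.toIsInducing.specializes_iff).mp h1
    exact h2.map U.2.fromSpec.base.hom.continuous

/-- The localized map on local rings at a prime induced by a localization homomorphism is an
isomorphism. -/
lemma isIso_localRingHom_of_isLocalization {R S : CommRingCat.{u}} (φ : R ⟶ S)
    (M : Submonoid R) (hM : @IsLocalization R _ M S _ (RingHom.toAlgebra φ.hom))
    (p : PrimeSpectrum S) :
    IsIso (CommRingCat.ofHom (Localization.localRingHom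
      (PrimeSpectrum.comap φ.hom p).asIdeal p.asIdeal φ.hom rfl)) := by
  letI : Algebra R S := RingHom.toAlgebra φ.hom
  haveI : IsLocalization M S := hM
  letI : Algebra ↑R (Localization.AtPrime p.asIdeal) :=
    ((algebraMap ↑S (Localization.AtPrime p.asIdeal)).comp φ.hom).toAlgebra
  haveI : @IsScalarTower ↑R ↑S (Localization.AtPrime p.asIdeal)
      Algebra.toSMul Algebra.toSMul Algebra.toSMul :=
    IsScalarTower.of_algebraMap_eq' rfl
  haveI h2 : IsLocalization.AtPrime (Localization.AtPrime p.asIdeal)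
      (p.asIdeal.comap (algebraMap R S)) :=
    IsLocalization.isLocalization_isLocalization_atPrime_isLocalization M _ p.asIdeal
  haveI h2' : IsLocalization (PrimeSpectrum.comap φ.hom p).asIdeal.primeCompl
      (Localization.AtPrime p.asIdeal) := h2
  let e : Localization.AtPrime (PrimeSpectrum.comap φ.hom p).asIdeal ≃ₐ[R]
      Localization.AtPrime p.asIdeal :=
    IsLocalization.algEquiv (PrimeSpectrum.comap φ.hom p).asIdeal.primeCompl _ _
  have key : ∀ x : ↑R, Localization.localRingHom (PrimeSpectrum.comap φ.hom p).asIdeal p.asIdeal φ.hom rfl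
      ((algebraMap ↑R (Localization.AtPrime (PrimeSpectrum.comap φ.hom p).asIdeal)) x) =
      e ((algebraMap ↑R (Localization.AtPrime (PrimeSpectrum.comap φ.hom p).asIdeal)) x) := by
    intro x
    erw [Localization.localRingHom_to_map]
  have heq : (Localization.localRingHom (PrimeSpectrum.comap φ.hom p).asIdeal p.asIdeal φ.hom rfl) =
      (e : Localization.AtPrime (PrimeSpectrum.comap φ.hom p).asIdeal →+*
        Localization.AtPrime p.asIdeal) := by
    apply IsLocalization.ringHom_ext (PrimeSpectrum.comap φ.hom p).asIdeal.primeCompl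
    refine RingHom.ext fun x => ?_
    exact key x
  have hbij : Function.Bijective (Localization.localRingHom
      (PrimeSpectrum.comap φ.hom p).asIdeal p.asIdeal φ.hom rfl) := by
    rw [heq]; exact e.bijective
  exact (ConcreteCategory.isIso_iff_bijective _).mpr hbij

/-- The stalk map of `Spec` of a localization homomorphism is an isomorphism. -/
lemma isIso_stalkMap_spec {R S : CommRingCat.{u}} (φ : R ⟶ S)
    (h : IsLocalizationHom φ.hom) (p : PrimeSpectrum S) : IsIso ((Spec.map φ).stalkMap p) := by
  obtain ⟨M, hM⟩ := h
  rw [← Scheme.localRingHom_comp_stalkIso]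
  haveI := isIso_localRingHom_of_isLocalization φ M hM p
  exact IsIso.comp_isIso' (Iso.isIso_hom _) (IsIso.comp_isIso' this (Iso.isIso_inv _))

/-- At a point of a chart of a localizing morphism, the stalk map is an isomorphism. -/
lemma isIso_stalkMap_of_chart {X Y : Scheme.{u}} (f : X ⟶ Y) (U : X.affineOpens)
    (V : Y.affineOpens) (hle : U.1 ≤ f ⁻¹ᵁ V.1)
    (hloc : IsLocalizationHom (f.appLE V.1 U.1 hle).hom)
    {x : X} (hx : x ∈ U.1) : IsIso (f.stalkMap x) := by
  haveI := U.2.isOpenImmersion_fromSpec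
  haveI := V.2.isOpenImmersion_fromSpec
  obtain ⟨q, hq⟩ : x ∈ Set.range U.2.fromSpec.base := IsAffineOpen.range_fromSpec U.2 ▸ hx
  subst hq
  have hdiag : Spec.map (f.appLE V.1 U.1 hle) ≫ V.2.fromSpec = U.2.fromSpec ≫ f :=
    IsAffineOpen.SpecMap_appLE_fromSpec f V.2 U.2 hle
  haveI h1 : IsIso ((Spec.map (f.appLE V.1 U.1 hle) ≫ V.2.fromSpec).stalkMap q) := by
    rw [Scheme.Hom.stalkMap_comp]
    haveI := isIso_stalkMap_spec (f.appLE V.1 U.1 hle) hloc q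
    have hV : ∀ y, IsIso (V.2.fromSpec.stalkMap y) := fun y => inferInstance
    exact IsIso.comp_isIso' (hV _) this
  haveI h2 : IsIso ((U.2.fromSpec ≫ f).stalkMap q) := by
    rw [Scheme.Hom.stalkMap_congr_hom _ _ hdiag.symm q]
    infer_instance
  rw [Scheme.Hom.stalkMap_comp] at h2
  have hU : ∀ y, IsIso (U.2.fromSpec.stalkMap y) := fun y => inferInstance
  exact @IsIso.of_isIso_comp_right _ _ _ _ _ _ ((U.2.fromSpec).stalkMap q) (hU q) h2

/-- A surjective localizing immersion of noetherian schemes is an isomorphism; more generally,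
a localizing immersion with closed image is an isomorphism onto an open and closed subscheme
(a union of connected components), i.e. it is both an open immersion and a closed
immersion. -/
theorem isLocalizingImmersion_isIso_or_clopen
    {X Y : Scheme.{u}} [IsNoetherian X] [IsNoetherian Y] (f : X ⟶ Y)
    (hf : IsLocalizingImmersion f) :
    (Function.Surjective f.base → IsIso f) ∧
    (IsClosed (Set.range f.base) → IsOpenImmersion f ∧ IsClosedImmersion f) := by
  classical
  obtain ⟨hlocz, hinj⟩ := hf
  choose V hyV 𝒰 hcov hloc using hlocz
  obtain ⟨t, ht⟩ := isCompact_univ.elim_finite_subcover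
    (fun y : Y => ((V y).1 : Set Y)) (fun y => (V y).1.2) (fun y _ => Set.mem_iUnion.2 ⟨y, hyV y⟩)
  set s : Finset (Y × X.affineOpens) := t.biUnion (fun y => (𝒰 y).image (fun U => (y, U)))
    with hs
  have hmem : ∀ p ∈ s, p.1 ∈ t ∧ p.2 ∈ 𝒰 p.1 := by
    intro p hp
    rw [hs, Finset.mem_biUnion] at hp
    obtain ⟨y, hy, hp⟩ := hp
    rw [Finset.mem_image] at hp
    obtain ⟨U, hU, rfl⟩ := hp
    exact ⟨hy, hU⟩
  have hcov' : ∀ x : X, ∃ p ∈ s, x ∈ p.2.1 := by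
    intro x
    have hin : f.base x ∈ ⋃ y ∈ t, ((V y).1 : Set Y) := ht (Set.mem_univ _)
    obtain ⟨y, hy, hyx⟩ := Set.mem_iUnion₂.mp hin
    obtain ⟨U, hU, hxU⟩ := hcov y x hyx
    have hmem2 : (y, U) ∈ s := by
      rw [hs]
      exact Finset.mem_biUnion.2 ⟨y, hy, Finset.mem_image.2 ⟨U, hU, rfl⟩⟩
    exact ⟨(y, U), hmem2, hxU⟩
  have key : ∀ p ∈ s,
      ((∃ (ι : Type u) (_ : Nonempty ι) (O : ι → Set Y),
          (∀ i, IsOpen (O i)) ∧ f.base '' p.2.1 = ⋂ i, O i) ∧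
       (∀ Z : Set X, IsClosed Z →
          ∃ C : Set Y, IsClosed C ∧ f.base '' (Z ∩ p.2.1) = C ∩ f.base '' p.2.1) ∧
       (∀ z x' : X, z ∈ p.2.1 → x' ∈ p.2.1 → f.base z ⤳ f.base x' → z ⤳ x')) ∧
      (∀ x ∈ p.2.1, IsIso (f.stalkMap x)) := by
    intro p hp
    obtain ⟨hle, hl⟩ := hloc p.1 p.2 (hmem p hp).2
    exact ⟨chart_facts f p.2 (V p.1) hle hl,
      fun x hx => isIso_stalkMap_of_chart f p.2 (V p.1) hle hl hx⟩
  have hgen : StableUnderGeneralization (Set.range f.base) := by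
    intro b a hab hb
    obtain ⟨x, rfl⟩ := hb
    obtain ⟨p, hp, hxU⟩ := hcov' x
    obtain ⟨⟨ι, hne, O, hOopen, hOeq⟩, -, -⟩ := (key p hp).1
    have h1 : f.base x ∈ ⋂ i, O i := hOeq ▸ Set.mem_image_of_mem _ hxU
    have h2 : a ∈ ⋂ i, O i :=
      Set.mem_iInter.2 fun i => hab.mem_open (hOopen i) (Set.mem_iInter.1 h1 i)
    rw [← hOeq] at h2
    exact Set.image_subset_range _ _ h2
  have main2 : IsClosed (Set.range f.base) → IsOpenImmersion f ∧ IsClosedImmersion f := by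
    intro hrange
    have hclosedmap : IsClosedMap f.base := by
      intro Z hZ
      have hA : ∀ x ∈ Z, ∀ w : Y, f.base x ⤳ w → w ∈ f.base '' Z := by
        intro x hx w hw
        have hwr : w ∈ Set.range f.base :=
          hrange.stableUnderSpecialization hw (Set.mem_range_self x)
        obtain ⟨x', rfl⟩ := hwr
        obtain ⟨p, hp, hx'U⟩ := hcov' x'
        obtain ⟨⟨ι, hne, O, hOopen, hOeq⟩, -, hc⟩ := (key p hp).1
        have hfx' : f.base x' ∈ ⋂ i, O i := hOeq ▸ Set.mem_image_of_mem _ hx'U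
        have hfx : f.base x ∈ ⋂ i, O i :=
          Set.mem_iInter.2 fun i => hw.mem_open (hOopen i) (Set.mem_iInter.1 hfx' i)
        have hxU : x ∈ p.2.1 := by
          rw [← hOeq] at hfx
          obtain ⟨x₀, hx₀, he⟩ := hfx
          rwa [← hinj he]
        have hzz : x ⤳ x' := hc x x' hxU hx'U hw
        exact ⟨x', hzz.mem_closed hZ hx, rfl⟩
      rw [← closure_subset_iff_isClosed]
      intro w hw
      obtain ⟨η, hηw, hηcl⟩ := exists_generization_of_mem_closure _ hw
      have hdecomp : f.base '' Z = ⋃ p ∈ s, f.base '' (Z ∩ p.2.1) := by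
        apply Set.Subset.antisymm
        · rintro y ⟨x, hx, rfl⟩
          obtain ⟨p, hp, hxU⟩ := hcov' x
          exact Set.mem_iUnion₂.2 ⟨p, hp, ⟨x, ⟨hx, hxU⟩, rfl⟩⟩
        · exact Set.iUnion₂_subset fun p hp => Set.image_mono Set.inter_subset_left
      have hη2 : ∃ p ∈ s, η ∈ closure (f.base '' (Z ∩ p.2.1) ∩ closure {η}) := by
        have he1 : f.base '' Z ∩ closure {η} =
            ⋃ p ∈ s, (f.base '' (Z ∩ p.2.1) ∩ closure {η}) := by
          rw [hdecomp, Set.iUnion₂_inter]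
        rw [he1, Finset.closure_biUnion] at hηcl
        obtain ⟨p, hp, h⟩ := Set.mem_iUnion₂.mp hηcl
        exact ⟨p, hp, h⟩
      obtain ⟨p, hp, hη⟩ := hη2
      obtain ⟨⟨ι, hne, O, hOopen, hOeq⟩, hb, -⟩ := (key p hp).1
      obtain ⟨C, hCc, hCeq⟩ := hb Z hZ
      have hone : (f.base '' (Z ∩ p.2.1) ∩ closure {η}).Nonempty :=
        closure_nonempty_iff.mp ⟨η, hη⟩
      have hηC : η ∈ C := by
        have hsubC : closure (f.base '' (Z ∩ p.2.1) ∩ closure {η}) ⊆ C := by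
          apply closure_minimal _ hCc
          intro y hy
          have hy1 := hy.1
          rw [hCeq] at hy1
          exact hy1.1
        exact hsubC hη
      have hηO : ∀ i, η ∈ O i := by
        intro i
        by_contra hno
        have hsub : closure ({η} : Set Y) ⊆ (O i)ᶜ :=
          closure_minimal (Set.singleton_subset_iff.mpr hno) (hOopen i).isClosed_compl
        obtain ⟨ξ, hξ1, hξ2⟩ := hone
        have hξO : ξ ∈ O i := by
          have h3 : ξ ∈ f.base '' p.2.1 := Set.image_mono Set.inter_subset_right hξ1
          rw [hOeq] at h3
          exact Set.mem_iInter.1 h3 i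
        exact hsub hξ2 hξO
      have hηim : η ∈ f.base '' (Z ∩ p.2.1) := by
        rw [hCeq]
        exact ⟨hηC, hOeq ▸ Set.mem_iInter.2 hηO⟩
      obtain ⟨x, hxZ, hfx⟩ := hηim
      exact hA x hxZ.1 w (hfx ▸ hηw)
    have hemb : Topology.IsClosedEmbedding f.base :=
      Topology.IsClosedEmbedding.of_continuous_injective_isClosedMap
        f.base.hom.continuous hinj hclosedmap
    have hopen : IsOpen (Set.range f.base) :=
      isOpen_of_isClosed_stableUnderGeneralization hrange hgen
    have hoe : Topology.IsOpenEmbedding f.base := ⟨hemb.toIsEmbedding, hopen⟩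
    haveI hstalk : ∀ x : X, IsIso (f.stalkMap x) := fun x => by
      obtain ⟨p, hp, hx⟩ := hcov' x
      exact (key p hp).2 x hx
    have hOI : IsOpenImmersion f := IsOpenImmersion.of_isIso_stalkMap f hoe
    refine ⟨hOI, { isClosedEmbedding := hemb, stalkMap_surjective := fun x => ?_ }⟩
    haveI := hstalk x
    exact (ConcreteCategory.bijective_of_isIso (f.stalkMap x)).2
  refine ⟨?_, main2⟩
  intro hsurj
  have hru : Set.range f.base = Set.univ := Set.range_eq_univ.mpr hsurj
  obtain ⟨hOI, -⟩ := main2 (hru ▸ isClosed_univ)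
  haveI := hOI
  haveI : Epi f.base := (TopCat.epi_iff_surjective f.base).mpr hsurj
  exact IsOpenImmersion.isIso f
end

section
/- If f : X → Y is a localizing immersion of noetherian schemes, then every coherent ideal sheaf I ⊆ O_X extends to Y: there exists a coherent ideal sheaf J ⊆ O_Y such that the ideal J·O_X generated by the pullback of J in O_X equals I. -/
/-! Formalization of a statement from "Compactification for essentially finite-type maps"
(S. Nayak). All schemes are noetherian where stated. -/

open AlgebraicGeometry CategoryTheory CategoryTheory.Limits TopologicalSpace Opposite

universe u

/-- A quasi-coherent ideal sheaf on a scheme, described by its ideals of sections over affine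
opens (on a noetherian scheme these are exactly the coherent ideal sheaves). -/
structure QCohIdeal (X : Scheme.{u}) where
  ideal : ∀ U : X.affineOpens, Ideal Γ(X, U.1)
  map_eq : ∀ (U V : X.affineOpens) (h : V.1 ≤ U.1),
    ideal V = Ideal.map (X.presheaf.map (homOfLE h).op).hom (ideal U)

section Algebra

variable {A B C : Type u} [CommRing A] [CommRing B] [CommRing C]

theorem IsLocalizationHom.comp {φ : A →+* B} {ψ : B →+* C}
    (hφ : IsLocalizationHom φ) (hψ : IsLocalizationHom ψ) : IsLocalizationHom (ψ.comp φ) := by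
  obtain ⟨M, hM⟩ := hφ
  obtain ⟨N, hN⟩ := hψ
  letI := φ.toAlgebra; letI := ψ.toAlgebra; letI := (ψ.comp φ).toAlgebra
  haveI := hM; haveI := hN
  have hφa : algebraMap A B = φ := rfl
  have hψa : algebraMap B C = ψ := rfl
  have hMu : ∀ m : M, IsUnit (φ (m : A)) := fun m => hφa ▸ IsLocalization.map_units (M := M) B m
  have hNu : ∀ n : N, IsUnit (ψ (n : B)) := fun n => hψa ▸ IsLocalization.map_units (M := N) C n
  refine ⟨(IsUnit.submonoid C).comap (ψ.comp φ), ?_, ?_, ?_⟩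
  · rintro ⟨y, hy⟩
    exact hy
  · intro z
    obtain ⟨⟨b, n⟩, hb⟩ := IsLocalization.surj N z
    rw [hψa] at hb
    obtain ⟨⟨a', m'⟩, ha'⟩ := IsLocalization.surj M (n : B)
    rw [hφa] at ha'
    obtain ⟨⟨a, m⟩, ha⟩ := IsLocalization.surj M b
    rw [hφa] at ha
    have ha'T : (ψ.comp φ) a' ∈ IsUnit.submonoid C := by
      show IsUnit (ψ (φ a'))
      rw [← ha', map_mul]
      exact (hNu n).mul (IsUnit.map ψ (hMu m'))
    have hmT : (ψ.comp φ) (m : A) ∈ IsUnit.submonoid C := IsUnit.map ψ (hMu m)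
    refine ⟨⟨a * m' * m', ⟨(m' : A) * m * a', mul_mem (mul_mem (IsUnit.map ψ (hMu m') : _) hmT) ha'T⟩⟩, ?_⟩
    show z * (ψ.comp φ) ((m' : A) * m * a') = (ψ.comp φ) (a * m' * m')
    simp only [RingHom.comp_apply, map_mul]
    calc z * (ψ (φ (m' : A)) * ψ (φ (m : A)) * ψ (φ a'))
        = z * (ψ (φ (m' : A)) * ψ (φ (m : A)) * ψ ((n : B) * φ (m' : A))) := by rw [ha']
      _ = (z * ψ (n : B)) * ψ (φ (m : A)) * (ψ (φ (m' : A)) * ψ (φ (m' : A))) := by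
          rw [map_mul]; ring
      _ = ψ b * ψ (φ (m : A)) * (ψ (φ (m' : A)) * ψ (φ (m' : A))) := by rw [hb]
      _ = ψ (b * φ (m : A)) * (ψ (φ (m' : A)) * ψ (φ (m' : A))) := by rw [map_mul]
      _ = ψ (φ a) * (ψ (φ (m' : A)) * ψ (φ (m' : A))) := by rw [ha]
      _ = ψ (φ a) * ψ (φ (m' : A)) * ψ (φ (m' : A)) := by ring
  · intro x y hxy
    have h1 : ψ (φ x) = ψ (φ y) := hxy
    rw [← hψa] at h1
    obtain ⟨n, hn⟩ := IsLocalization.exists_of_eq (M := N) h1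
    obtain ⟨⟨a', m'⟩, ha'⟩ := IsLocalization.surj M (n : B)
    rw [hφa] at ha'
    have ha'T : IsUnit (ψ (φ a')) := by
      rw [← ha', map_mul]
      exact (hNu n).mul (IsUnit.map ψ (hMu m'))
    -- from n * φ x = n * φ y, multiplying by φ m' : φ(a' x) = φ(a' y)
    have h2 : φ (a' * x) = φ (a' * y) := by
      calc φ (a' * x) = φ a' * φ x := map_mul _ _ _
        _ = ((n : B) * φ (m' : A)) * φ x := by rw [← ha']
        _ = φ (m' : A) * ((n : B) * φ x) := by ring
        _ = φ (m' : A) * ((n : B) * φ y) := by rw [hn]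
        _ = ((n : B) * φ (m' : A)) * φ y := by ring
        _ = φ a' * φ y := by rw [ha']
        _ = φ (a' * y) := (map_mul _ _ _).symm
    obtain ⟨m, hm⟩ := IsLocalization.exists_of_eq (M := M) (show (algebraMap A B) (a' * x) = (algebraMap A B) (a' * y) by rw [hφa]; exact h2)
    refine ⟨⟨(m : A) * a', ?_⟩, ?_⟩
    · show IsUnit (ψ (φ ((m : A) * a')))
      rw [map_mul, map_mul]
      exact (IsUnit.map ψ (hMu m)).mul ha'T
    · show (m : A) * a' * x = (m : A) * a' * y
      simpa only [mul_assoc] using hm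

theorem IsLocalizationHom.cancel {φ : A →+* B} {ψ : B →+* C}
    (hφ : IsLocalizationHom φ) (hc : IsLocalizationHom (ψ.comp φ)) : IsLocalizationHom ψ := by
  obtain ⟨M, hM⟩ := hφ
  obtain ⟨T, hT⟩ := hc
  letI := φ.toAlgebra; letI := ψ.toAlgebra; letI := (ψ.comp φ).toAlgebra
  haveI := hM; haveI := hT
  have hφa : algebraMap A B = φ := rfl
  have hca : algebraMap A C = ψ.comp φ := rfl
  have hMu : ∀ m : M, IsUnit (φ (m : A)) := fun m => hφa ▸ IsLocalization.map_units (M := M) B m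
  have hψa : algebraMap B C = ψ := rfl
  have hTu : ∀ t : T, IsUnit (ψ (φ (t : A))) := fun t => by
    have := IsLocalization.map_units (M := T) C t
    rwa [hca] at this
  refine ⟨(IsUnit.submonoid C).comap ψ, ?_, ?_, ?_⟩
  · rintro ⟨y, hy⟩; exact hy
  · intro z
    obtain ⟨⟨a, t⟩, ha⟩ := IsLocalization.surj T z
    rw [hca] at ha
    exact ⟨⟨φ a, ⟨φ (t : A), hTu t⟩⟩, ha⟩
  · intro x y hxy
    obtain ⟨⟨a, m⟩, ha⟩ := IsLocalization.surj M x
    rw [hφa] at ha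
    obtain ⟨⟨b, n⟩, hb⟩ := IsLocalization.surj M y
    rw [hφa] at hb
    have h1 : (algebraMap A C) (a * n) = (algebraMap A C) (b * m) := by
      rw [hca]
      show ψ (φ (a * (n : A))) = ψ (φ (b * (m : A)))
      have hxy' : ψ x = ψ y := hxy
      rw [map_mul, map_mul, map_mul, map_mul, ← ha, ← hb, map_mul, map_mul, hxy']; ring
    obtain ⟨t, ht⟩ := IsLocalization.exists_of_eq (M := T) h1
    refine ⟨⟨φ ((t : A) * (m : A) * (n : A)), ?_⟩, ?_⟩
    · show IsUnit (ψ (φ ((t : A) * (m : A) * (n : A))))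
      simp only [map_mul]
      exact ((hTu t).mul (IsUnit.map ψ (hMu m))).mul (IsUnit.map ψ (hMu n))
    · show φ ((t : A) * (m : A) * (n : A)) * x = φ ((t : A) * (m : A) * (n : A)) * y
      have h2 : φ ((t : A) * (a * (n : A))) = φ ((t : A) * (b * (m : A))) := congrArg φ ht
      calc φ ((t : A) * (m : A) * (n : A)) * x
          = φ (t : A) * φ (n : A) * (x * φ (m : A)) := by simp only [map_mul]; ring
        _ = φ (t : A) * φ (n : A) * φ a := by rw [ha]
        _ = φ ((t : A) * (a * (n : A))) := by simp only [map_mul]; ring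
        _ = φ ((t : A) * (b * (m : A))) := h2
        _ = φ (t : A) * φ (m : A) * (y * φ (n : A)) := by rw [hb]; simp only [map_mul]; ring
        _ = φ ((t : A) * (m : A) * (n : A)) * y := by simp only [map_mul]; ring

/-- If the image of `z` in the localization of `B` away from `g` lies in the extension of `Ib`,
then some power of `g` times `z` lies in `Ib`. -/
theorem away_exists_pow_mul_mem (ψ : B →+* C) (g : B)
    (hloc : @IsLocalization B _ (Submonoid.powers g) C _ ψ.toAlgebra)
    (Ib : Ideal B) (z : B) (hz : ψ z ∈ Ideal.map ψ Ib) : ∃ n : ℕ, g ^ n * z ∈ Ib := by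
  letI := ψ.toAlgebra
  haveI := hloc
  have hψa : algebraMap B C = ψ := rfl
  rw [← hψa] at hz
  rw [IsLocalization.mem_map_algebraMap_iff (Submonoid.powers g) C] at hz
  obtain ⟨⟨⟨i, hi⟩, s⟩, hs⟩ := hz
  obtain ⟨m, hm⟩ := s.2
  have h1 : (algebraMap B C) (z * s) = (algebraMap B C) i := by
    rw [map_mul]; exact hs
  obtain ⟨c, hc⟩ := IsLocalization.exists_of_eq (M := Submonoid.powers g) h1
  obtain ⟨k, hk⟩ := c.2
  refine ⟨k + m, ?_⟩
  have hmem : (c : B) * (z * (s : B)) ∈ Ib := by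
    rw [hc]; exact Ideal.mul_mem_left _ _ hi
  have hk' : g ^ k = (c : B) := hk
  have hm' : g ^ m = (s : B) := hm
  have heq : g ^ (k + m) * z = (c : B) * (z * (s : B)) := by rw [pow_add, hk', hm']; ring
  rw [heq]; exact hmem

/-- Local-global principle: if `g ^ n * x ∈ a` for each `g` in a spanning set,
then `x ∈ a`. -/
theorem mem_of_span_eq_top_of_pow_mul_mem (a : Ideal A) (x : A) (s : Set A)
    (hs : Ideal.span s = ⊤) (h : ∀ g ∈ s, ∃ n : ℕ, g ^ n * x ∈ a) : x ∈ a := by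
  have hsub : s ⊆ (Submodule.colon a (Ideal.span {x})).radical := by
    intro g hg
    obtain ⟨n, hn⟩ := h g hg
    exact ⟨n, Ideal.mem_colon_span_singleton.mpr hn⟩
  have : Ideal.span s ≤ (Submodule.colon a (Ideal.span {x})).radical :=
    Ideal.span_le.mpr hsub
  rw [hs, top_le_iff, Ideal.radical_eq_top] at this
  have h1 : (1 : A) ∈ Submodule.colon a (Ideal.span {x}) := this ▸ Submodule.mem_top
  simpa using Ideal.mem_colon_span_singleton.mp h1

/-- Extension of ideals along a localization commutes with binary intersections. -/
theorem loc_map_inf (φ : A →+* B) (M : Submonoid A)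
    (hloc : @IsLocalization A _ M B _ φ.toAlgebra) (a b : Ideal A) :
    Ideal.map φ (a ⊓ b) = Ideal.map φ a ⊓ Ideal.map φ b := by
  letI := φ.toAlgebra
  haveI := hloc
  have hφa : algebraMap A B = φ := rfl
  refine le_antisymm (le_inf (Ideal.map_mono inf_le_left) (Ideal.map_mono inf_le_right)) ?_
  intro x hx
  rw [Submodule.mem_inf] at hx
  obtain ⟨hxa, hxb⟩ := hx
  rw [show Ideal.map φ a = Ideal.map (algebraMap A B) a from rfl,
    IsLocalization.mem_map_algebraMap_iff M B] at hxa
  rw [show Ideal.map φ b = Ideal.map (algebraMap A B) b from rfl,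
    IsLocalization.mem_map_algebraMap_iff M B] at hxb
  obtain ⟨⟨⟨a₁, ha₁⟩, s₁⟩, hs₁⟩ := hxa
  obtain ⟨⟨⟨b₁, hb₁⟩, s₂⟩, hs₂⟩ := hxb
  simp only at hs₁ hs₂
  have h1 : (algebraMap A B) (a₁ * s₂) = (algebraMap A B) (b₁ * s₁) := by
    rw [map_mul, map_mul, ← hs₁, ← hs₂]; ring
  obtain ⟨c, hc⟩ := IsLocalization.exists_of_eq (M := M) h1
  rw [show Ideal.map φ (a ⊓ b) = Ideal.map (algebraMap A B) (a ⊓ b) from rfl,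
    IsLocalization.mem_map_algebraMap_iff M B]
  have hd : (c : A) * (a₁ * s₂) ∈ a ⊓ b := by
    constructor
    · exact Ideal.mul_mem_left _ _ (Ideal.mul_mem_right _ _ ha₁)
    · rw [hc]; exact Ideal.mul_mem_left _ _ (Ideal.mul_mem_right _ _ hb₁)
  refine ⟨⟨⟨(c : A) * (a₁ * s₂), hd⟩, c * (s₁ * s₂)⟩, ?_⟩
  show x * (algebraMap A B) ((c : A) * (s₁ * s₂) : A) = (algebraMap A B) ((c : A) * (a₁ * s₂))
  simp only [map_mul]
  rw [← mul_assoc x, show x * (algebraMap A B) (c : A) = (algebraMap A B) (c : A) * x from mul_comm _ _]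
  calc (algebraMap A B) (c : A) * x * ((algebraMap A B) (s₁ : A) * (algebraMap A B) (s₂ : A))
      = (algebraMap A B) (c : A) * (x * (algebraMap A B) (s₁ : A)) * (algebraMap A B) (s₂ : A) := by ring
    _ = (algebraMap A B) (c : A) * (algebraMap A B) a₁ * (algebraMap A B) (s₂ : A) := by rw [hs₁]
    _ = (algebraMap A B) (c : A) * ((algebraMap A B) a₁ * (algebraMap A B) (s₂ : A)) := by ring

/-- Contraction commutes with localization in a commuting square of localizations. -/
theorem comap_map_localization_square
    {A' B' : Type u} [CommRing A'] [CommRing B']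
    (α : A →+* A') (β : B →+* B') (φ : A →+* B) (φ' : A' →+* B')
    (hcomm : ∀ z : A, φ' (α z) = β (φ z)) (M : Submonoid A)
    (hα : @IsLocalization A _ M A' _ α.toAlgebra)
    (hβ : @IsLocalization B _ (M.map φ) B' _ β.toAlgebra)
    (Ib : Ideal B) :
    Ideal.comap φ' (Ideal.map β Ib) = Ideal.map α (Ideal.comap φ Ib) := by
  letI := α.toAlgebra; letI := β.toAlgebra
  haveI := hα; haveI := hβ
  have hαa : algebraMap A A' = α := rfl
  have hβa : algebraMap B B' = β := rfl
  have hβu : ∀ m : M, IsUnit (β (φ (m : A))) := fun m =>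
    hβa ▸ IsLocalization.map_units (M := M.map φ) B' ⟨φ m, ⟨m, m.2, rfl⟩⟩
  have hαu : ∀ m : M, IsUnit (α (m : A)) := fun m =>
    hαa ▸ IsLocalization.map_units (M := M) A' m
  apply le_antisymm
  · intro x hx
    rw [Ideal.mem_comap] at hx
    obtain ⟨⟨a, m⟩, ham⟩ := IsLocalization.surj M x
    rw [hαa] at ham
    -- φ' x * β (φ m) = β (φ a)
    have h1 : φ' x * β (φ (m : A)) = β (φ a) := by
      rw [← hcomm, ← hcomm, ← map_mul]; exact congrArg φ' ham
    have h2 : β (φ a) ∈ Ideal.map β Ib := by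
      rw [← h1]; exact Ideal.mul_mem_right _ _ hx
    rw [show Ideal.map β Ib = Ideal.map (algebraMap B B') Ib from rfl,
      IsLocalization.mem_map_algebraMap_iff (M.map φ) B'] at h2
    obtain ⟨⟨⟨i, hi⟩, s⟩, hs⟩ := h2
    obtain ⟨n, hn, hns⟩ := s.2
    have h3 : (algebraMap B B') (φ a * φ n) = (algebraMap B B') i := by
      rw [map_mul, hβa]
      rw [← hns] at hs
      exact hs
    obtain ⟨c, hc⟩ := IsLocalization.exists_of_eq (M := M.map φ) h3
    obtain ⟨d, hd, hdc⟩ := c.2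
    -- φ (d * a * n) ∈ Ib
    have h4 : d * a * n ∈ Ideal.comap φ Ib := by
      rw [Ideal.mem_comap]
      have : (c : B) * (φ a * φ n) ∈ Ib := by rw [hc]; exact Ideal.mul_mem_left _ _ hi
      rw [← hdc] at this
      rw [map_mul, map_mul, mul_assoc]
      exact this
    -- x = α (d a n) / α (m d n)
    have h5 : x * α ((m : A) * d * n) = α (d * a * n) := by
      simp only [map_mul]
      calc x * (α (m : A) * α d * α n) = (x * α (m : A)) * α d * α n := by ring
        _ = α a * α d * α n := by rw [ham]
        _ = α d * α a * α n := by ring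
    have hu : IsUnit (α ((m : A) * d * n)) := by
      rw [map_mul, map_mul]
      exact ((hαu m).mul (hαu ⟨d, hd⟩)).mul (hαu ⟨n, hn⟩)
    obtain ⟨u, hu'⟩ := hu
    have : x = α (d * a * n) * (u⁻¹ : A'ˣ) := by
      rw [← h5, ← hu', mul_assoc, Units.mul_inv, mul_one]
    rw [this]
    exact Ideal.mul_mem_right _ _ (Ideal.mem_map_of_mem _ h4)
  · rw [Ideal.map_le_iff_le_comap]
    intro k hk
    rw [Ideal.mem_comap, Ideal.mem_comap, hcomm]
    exact Ideal.mem_map_of_mem _ hk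

end Algebra

section SchemeHelpers

open AlgebraicGeometry

variable {X Y : Scheme.{u}}

/-- Restriction of `appLE` as a ring hom composition. -/
lemma appLE_res_ringHom (f : X ⟶ Y) {V : Y.Opens} {U U' : X.Opens}
    (e : U ≤ f ⁻¹ᵁ V) (h' : U' ≤ U) (p : U' ≤ f ⁻¹ᵁ V) :
    RingHom.comp (X.presheaf.map (homOfLE h').op).hom (f.appLE V U e).hom = (f.appLE V U' p).hom := by
  rw [← CommRingCat.hom_comp, Scheme.Hom.appLE_map]

lemma res_appLE_ringHom (f : X ⟶ Y) {V' V : Y.Opens} {U : X.Opens}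
    (hVV' : V' ≤ V) (e : U ≤ f ⁻¹ᵁ V') (p : U ≤ f ⁻¹ᵁ V) :
    RingHom.comp (f.appLE V' U e).hom (Y.presheaf.map (homOfLE hVV').op).hom = (f.appLE V U p).hom := by
  rw [← CommRingCat.hom_comp, Scheme.Hom.map_appLE]

lemma appLE_res_apply (f : X ⟶ Y) {V : Y.Opens} {U U' : X.Opens}
    (e : U ≤ f ⁻¹ᵁ V) (h' : U' ≤ U) (p : U' ≤ f ⁻¹ᵁ V) (a : Γ(Y, V)) :
    X.presheaf.map (homOfLE h').op (f.appLE V U e a) = f.appLE V U' p a := by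
  exact RingHom.congr_fun (appLE_res_ringHom f e h' p) a

lemma res_appLE_apply (f : X ⟶ Y) {V' V : Y.Opens} {U : X.Opens}
    (hVV' : V' ≤ V) (e : U ≤ f ⁻¹ᵁ V') (p : U ≤ f ⁻¹ᵁ V) (a : Γ(Y, V)) :
    f.appLE V' U e (Y.presheaf.map (homOfLE hVV').op a) = f.appLE V U p a := by
  exact RingHom.congr_fun (res_appLE_ringHom f hVV' e p) a

lemma isLocalizationHom_res_of_eq_basicOpen {Z : Scheme.{u}} {U W : Z.Opens}
    (hU : IsAffineOpen U) (g : Γ(Z, U)) (hW : W = Z.basicOpen g) (hle : W ≤ U) :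
    IsLocalizationHom (Z.presheaf.map (homOfLE hle).op).hom :=
  ⟨Submonoid.powers g, hU.isLocalization_of_eq_basicOpen g (homOfLE hle) hW⟩

lemma isLocalizationHom_res_basicOpen {Z : Scheme.{u}} {U : Z.Opens}
    (hU : IsAffineOpen U) (g : Γ(Z, U)) :
    IsLocalizationHom
      (Z.presheaf.map (homOfLE (Z.basicOpen_le g)).op).hom :=
  isLocalizationHom_res_of_eq_basicOpen hU g rfl _

/-- Every affine open contained in a union of affine opens may be covered by finitely many
basic opens which are simultaneously basic in a member of the covering family. -/
lemma exists_doubly_basic_cover {Z : Scheme.{u}} [AlgebraicGeometry.IsNoetherian Z]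
    (O : Z.affineOpens) (P : Z.affineOpens → Prop)
    (hcov : ∀ x ∈ O.1, ∃ U, P U ∧ x ∈ U.1) :
    ∃ s : Finset Γ(Z, O.1), Ideal.span (s : Set Γ(Z, O.1)) = ⊤ ∧
      ∀ g ∈ s, ∃ U, P U ∧ ∃ g₂ : Γ(Z, U.1), Z.basicOpen g = Z.basicOpen g₂ := by
  classical
  have key : ∀ x : O.1, ∃ g : Γ(Z, O.1), ((x : Z) ∈ Z.basicOpen g) ∧
      ∃ U, P U ∧ ∃ g₂ : Γ(Z, U.1), Z.basicOpen g = Z.basicOpen g₂ := by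
    rintro ⟨x, hx⟩
    obtain ⟨U, hPU, hxU⟩ := hcov x hx
    obtain ⟨g, g₂, hg, hxg⟩ := exists_basicOpen_le_affine_inter O.2 U.2 x ⟨hx, hxU⟩
    exact ⟨g, hxg, U, hPU, g₂, hg⟩
  choose g hg hrest using key
  have hZc : IsCompact (O.1 : Set Z) := NoetherianSpace.isCompact _
  have hsub : (O.1 : Set Z) ⊆ ⋃ x : O.1, ((Z.basicOpen (g x) : Opens Z) : Set Z) := fun y hy =>
    Set.mem_iUnion.mpr ⟨⟨y, hy⟩, hg ⟨y, hy⟩⟩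
  obtain ⟨t, ht⟩ := hZc.elim_finite_subcover (fun x : O.1 => ((Z.basicOpen (g x) : Opens Z) : Set Z))
    (fun x => (Z.basicOpen (g x)).2) hsub
  refine ⟨t.image g, ?_, ?_⟩
  · rw [← (O.2.self_le_iSup_basicOpen_iff (s := ((t.image g : Finset Γ(Z, O.1)) : Set Γ(Z, O.1))))]
    intro y hy
    obtain ⟨xt, hxt⟩ := Set.mem_iUnion.mp (ht hy)
    obtain ⟨hxmem, hyx⟩ := Set.mem_iUnion.mp hxt
    apply Opens.mem_iSup.mpr
    exact ⟨⟨g xt, Finset.mem_coe.mpr (Finset.mem_image_of_mem g hxmem)⟩, hyx⟩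
  · intro gg hgg
    obtain ⟨x, _, rfl⟩ := Finset.mem_image.mp hgg
    exact hrest x

end SchemeHelpers

section GoodCover

open AlgebraicGeometry

variable {X Y : Scheme.{u}}

/-- A finite affine cover of `f ⁻¹ V` by localizing opens. -/
def IsGoodCover (f : X ⟶ Y) (V : Y.affineOpens) (𝒰 : Finset X.affineOpens) : Prop :=
  (∀ x : X, f.base x ∈ V.1 → ∃ U ∈ 𝒰, x ∈ U.1) ∧
  ∀ U ∈ 𝒰, ∃ hle : U.1 ≤ f ⁻¹ᵁ V.1, IsLocalizationHom (f.appLE V.1 U.1 hle).hom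

/-- A good cover of `V` restricts to a good cover of any basic open of `V`. -/
lemma IsGoodCover.basicOpen {f : X ⟶ Y} {V : Y.affineOpens} {𝒰 : Finset X.affineOpens}
    (h : IsGoodCover f V 𝒰) (r : Γ(Y, V.1)) :
    ∃ 𝒰', IsGoodCover f ⟨Y.basicOpen r, V.2.basicOpen r⟩ 𝒰' := by
  classical
  choose hle hloc using h.2
  refine ⟨𝒰.attach.image (fun U =>
    (⟨X.basicOpen (f.appLE V.1 U.1.1 (hle U.1 U.2) r), U.1.2.basicOpen _⟩ : X.affineOpens)),
    ?_, ?_⟩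
  · intro x hx
    have hxV : f.base x ∈ V.1 := Y.basicOpen_le r hx
    obtain ⟨U, hU, hxU⟩ := h.1 x hxV
    refine ⟨_, Finset.mem_image_of_mem _ (Finset.mem_attach _ ⟨U, hU⟩), ?_⟩
    show x ∈ X.basicOpen (f.appLE V.1 U.1 (hle U hU) r)
    rw [Scheme.basicOpen_appLE]
    exact ⟨hxU, hx⟩
  · intro W hW
    obtain ⟨U, -, rfl⟩ := Finset.mem_image.mp hW
    have hle' : X.basicOpen (f.appLE V.1 U.1.1 (hle U.1 U.2) r) ≤
        f ⁻¹ᵁ (Y.basicOpen r) := by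
      rw [Scheme.basicOpen_appLE]; exact inf_le_right
    refine ⟨hle', ?_⟩
    -- appLE (basicOpen r) (basicOpen (appLE r)) ∘ res = res ∘ appLE V U, a localization hom
    have hUle : (X.basicOpen (f.appLE V.1 U.1.1 (hle U.1 U.2) r) : X.Opens) ≤ U.1.1 :=
      X.basicOpen_le _
    have hres : IsLocalizationHom
        (Y.presheaf.map (homOfLE (Y.basicOpen_le r)).op).hom :=
      isLocalizationHom_res_basicOpen V.2 r
    have hresU : IsLocalizationHom
        (X.presheaf.map (homOfLE hUle).op).hom :=
      isLocalizationHom_res_of_eq_basicOpen U.1.2 _ rfl hUle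
    have hcomp : IsLocalizationHom (RingHom.comp
        (X.presheaf.map (homOfLE hUle).op).hom (f.appLE V.1 U.1.1 (hle U.1 U.2)).hom) :=
      (hloc U.1 U.2).comp hresU
    rw [appLE_res_ringHom f (hle U.1 U.2) hUle (hUle.trans (hle U.1 U.2))] at hcomp
    have heq : RingHom.comp
        (f.appLE (Y.basicOpen r) (X.basicOpen (f.appLE V.1 U.1.1 (hle U.1 U.2) r)) hle').hom
        (Y.presheaf.map (homOfLE (Y.basicOpen_le r)).op).hom =
        (f.appLE V.1 _ (hUle.trans (hle U.1 U.2))).hom :=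
      res_appLE_ringHom f (Y.basicOpen_le r) hle' _
    rw [← heq] at hcomp
    exact hres.cancel hcomp

/-- Transport of good covers from a basic open to the ambient affine. -/
lemma IsGoodCover.of_basicOpen {f : X ⟶ Y} {V : Y.affineOpens} (r : Γ(Y, V.1))
    {𝒰 : Finset X.affineOpens} (h : IsGoodCover f ⟨Y.basicOpen r, V.2.basicOpen r⟩ 𝒰) :
    ∀ U ∈ 𝒰, ∃ hle : U.1 ≤ f ⁻¹ᵁ V.1, IsLocalizationHom (f.appLE V.1 U.1 hle).hom := by
  intro U hU
  obtain ⟨hle, hloc⟩ := h.2 U hU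
  have hVle : (Y.basicOpen r : Y.Opens) ≤ V.1 := Y.basicOpen_le r
  have hle' : U.1 ≤ f ⁻¹ᵁ V.1 := hle.trans (fun x hx => hVle hx)
  refine ⟨hle', ?_⟩
  have hres : IsLocalizationHom
      (Y.presheaf.map (homOfLE hVle).op).hom :=
    isLocalizationHom_res_basicOpen V.2 r
  have := hres.comp hloc
  rwa [res_appLE_ringHom f hVle hle hle'] at this

/-- Existence of good covers over every affine open of the target. -/
lemma exists_isGoodCover {f : X ⟶ Y} [AlgebraicGeometry.IsNoetherian Y]
    (hf : IsLocalizingMorphism f) (V : Y.affineOpens) : ∃ 𝒰, IsGoodCover f V 𝒰 := by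
  classical
  -- cover V by opens that are doubly basic in V and in some affine admitting a good cover
  have hcv : ∀ y ∈ V.1, ∃ W, (∃ 𝒰, IsGoodCover f W 𝒰) ∧ y ∈ W.1 := by
    intro y _
    obtain ⟨W, hyW, 𝒰, hcov, hloc⟩ := hf y
    exact ⟨W, ⟨𝒰, hcov, hloc⟩, hyW⟩
  obtain ⟨s, hs, hdb⟩ := exists_doubly_basic_cover V (fun W => ∃ 𝒰, IsGoodCover f W 𝒰) hcv
  -- for each g in s, choose a good cover of the basic open
  have key : ∀ g : Γ(Y, V.1), g ∈ s →
      ∃ 𝒰g, IsGoodCover f ⟨Y.basicOpen g, V.2.basicOpen g⟩ 𝒰g := by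
    intro g hgs
    obtain ⟨W, ⟨𝒰W, hW⟩, g₂, hgg₂⟩ := hdb g hgs
    obtain ⟨𝒰g, hg⟩ := hW.basicOpen g₂
    refine ⟨𝒰g, ?_⟩
    have : (⟨Y.basicOpen g₂, W.2.basicOpen g₂⟩ : Y.affineOpens) =
        ⟨Y.basicOpen g, V.2.basicOpen g⟩ := Subtype.ext hgg₂.symm
    rwa [this] at hg
  choose 𝒰g h𝒰g using key
  refine ⟨(s.attach).biUnion (fun g => 𝒰g g.1 g.2), ?_, ?_⟩
  · intro x hx
    -- f x ∈ V = ⨆ basic opens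
    have : f.base x ∈ (⨆ g : (s : Set Γ(Y, V.1)), Y.basicOpen (g : Γ(Y, V.1)) : Y.Opens) :=
      (V.2.self_le_iSup_basicOpen_iff (s := _)).mpr hs hx
    obtain ⟨⟨g, hgs⟩, hmem⟩ := Opens.mem_iSup.mp this
    obtain ⟨U, hU, hxU⟩ := (h𝒰g g hgs).1 x hmem
    exact ⟨U, Finset.mem_biUnion.mpr ⟨⟨g, hgs⟩, Finset.mem_attach _ _, hU⟩, hxU⟩
  · intro U hU
    obtain ⟨⟨g, hgs⟩, -, hUg⟩ := Finset.mem_biUnion.mp hU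
    exact IsGoodCover.of_basicOpen g (h𝒰g g hgs) U hUg

end GoodCover

section Core

open AlgebraicGeometry

variable {X Y : Scheme.{u}}

/-- The candidate extension ideal: the largest ideal whose pullback lands in `I` everywhere. -/
def extIdeal (f : X ⟶ Y) (I : QCohIdeal X) (V : Y.affineOpens) : Ideal Γ(Y, V.1) :=
  ⨅ (U : X.affineOpens), ⨅ (hle : U.1 ≤ f ⁻¹ᵁ V.1), (I.ideal U).comap (f.appLE V.1 U.1 hle).hom

lemma mem_extIdeal_iff {f : X ⟶ Y} {I : QCohIdeal X} {V : Y.affineOpens} {a : Γ(Y, V.1)} :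
    a ∈ extIdeal f I V ↔
      ∀ (U : X.affineOpens) (hle : U.1 ≤ f ⁻¹ᵁ V.1), f.appLE V.1 U.1 hle a ∈ I.ideal U := by
  simp only [extIdeal, Submodule.mem_iInf, Ideal.mem_comap]

/-- Membership in `I` can be checked on a good cover. -/
lemma goodCover_mem_all {f : X ⟶ Y} [AlgebraicGeometry.IsNoetherian X] (I : QCohIdeal X)
    {V : Y.affineOpens} {𝒰 : Finset X.affineOpens} (h𝒰 : IsGoodCover f V 𝒰)
    (a : Γ(Y, V.1))
    (ha : ∀ U ∈ 𝒰, ∀ hle : U.1 ≤ f ⁻¹ᵁ V.1, f.appLE V.1 U.1 hle a ∈ I.ideal U)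
    (U' : X.affineOpens) (hle' : U'.1 ≤ f ⁻¹ᵁ V.1) : f.appLE V.1 U'.1 hle' a ∈ I.ideal U' := by
  have hcv : ∀ x ∈ U'.1, ∃ U, U ∈ 𝒰 ∧ x ∈ U.1 := by
    intro x hx
    obtain ⟨U, hU, hxU⟩ := h𝒰.1 x (hle' hx)
    exact ⟨U, hU, hxU⟩
  obtain ⟨s, hs, hdb⟩ := exists_doubly_basic_cover U' (fun W => W ∈ 𝒰) hcv
  apply mem_of_span_eq_top_of_pow_mul_mem _ _ _ hs
  intro g' hg'
  obtain ⟨U, hU𝒰, g₂, hgg₂⟩ := hdb g' hg'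
  have hWaff : IsAffineOpen (X.basicOpen g') := U'.2.basicOpen g'
  set W : X.affineOpens := ⟨X.basicOpen g', hWaff⟩ with hWdef
  have hWU' : W.1 ≤ U'.1 := X.basicOpen_le g'
  have hWU : W.1 ≤ U.1 := by
    show (X.basicOpen g' : X.Opens) ≤ U.1
    rw [hgg₂]; exact X.basicOpen_le g₂
  obtain ⟨hleU, -⟩ := h𝒰.2 U hU𝒰
  have hWle : W.1 ≤ f ⁻¹ᵁ V.1 := hWU.trans hleU
  have h1 : X.presheaf.map (homOfLE hWU').op (f.appLE V.1 U'.1 hle' a) =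
      f.appLE V.1 W.1 hWle a := appLE_res_apply f hle' hWU' hWle a
  have h2 : X.presheaf.map (homOfLE hWU).op (f.appLE V.1 U.1 hleU a) =
      f.appLE V.1 W.1 hWle a := appLE_res_apply f hleU hWU hWle a
  have hmem : f.appLE V.1 W.1 hWle a ∈ I.ideal W := by
    rw [I.map_eq U W hWU, ← h2]
    exact Ideal.mem_map_of_mem _ (ha U hU𝒰 hleU)
  rw [I.map_eq U' W hWU'] at hmem
  exact away_exists_pow_mul_mem (X.presheaf.map (homOfLE hWU').op).hom g'
    (U'.2.isLocalization_of_eq_basicOpen g' (homOfLE hWU') rfl) (I.ideal U') _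
    (by rw [h1]; exact hmem)

/-- The key geometric input: if `q` is a prime of `Γ(X, Uⱼ)` avoiding the image of the
multiplicative set of the localizing open `U`, and `a` pulls back into `I` over `U`, then
some element outside `q` multiplies `a` into `I` over `Uⱼ`. -/
lemma exists_pow_mul_mem_of_prime {f : X ⟶ Y} (hf : Function.Injective f.base)
    (I : QCohIdeal X) (V : Y.affineOpens) (U Uj : X.affineOpens)
    (hleU : U.1 ≤ f ⁻¹ᵁ V.1) (hlej : Uj.1 ≤ f ⁻¹ᵁ V.1)
    (M : Submonoid Γ(Y, V.1))
    (hM : @IsLocalization _ _ M Γ(X, U.1) _ (f.appLE V.1 U.1 hleU).hom.toAlgebra)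
    (a : Γ(Y, V.1)) (ha : f.appLE V.1 U.1 hleU a ∈ I.ideal U)
    (q : Ideal Γ(X, Uj.1)) (hq : q.IsPrime)
    (hdisj : ∀ t ∈ M, f.appLE V.1 Uj.1 hlej t ∉ q) :
    ∃ g : Γ(X, Uj.1), g ∉ q ∧ ∃ n : ℕ, g ^ n * (f.appLE V.1 Uj.1 hlej a) ∈ I.ideal Uj := by
  letI := (f.appLE V.1 U.1 hleU).hom.toAlgebra
  haveI := hM
  have halg : algebraMap Γ(Y, V.1) Γ(X, U.1) = (f.appLE V.1 U.1 hleU).hom := rfl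
  -- the contracted prime in Γ(Y, V)
  set p : Ideal Γ(Y, V.1) := q.comap (f.appLE V.1 Uj.1 hlej).hom with hp
  haveI hpprime : p.IsPrime := Ideal.IsPrime.comap _
  have hdisj' : Disjoint (M : Set Γ(Y, V.1)) (p : Set Γ(Y, V.1)) := by
    rw [Set.disjoint_left]
    intro t htM htp
    exact hdisj t htM htp
  -- the corresponding prime upstairs over U
  set r : Ideal Γ(X, U.1) := p.map (algebraMap Γ(Y, V.1) Γ(X, U.1)) with hr
  haveI hrprime : r.IsPrime := IsLocalization.isPrime_of_isPrime_disjoint M _ p hpprime hdisj'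
  have hrcomap : r.comap (algebraMap Γ(Y, V.1) Γ(X, U.1)) = p :=
    IsLocalization.comap_map_of_isPrime_disjoint M _ hpprime hdisj'
  -- corresponding points of X
  set xq : X := Uj.2.fromSpec.base ⟨q, hq⟩ with hxq
  set xr : X := U.2.fromSpec.base ⟨r, hrprime⟩ with hxr
  have hfxq : f.base xq = V.2.fromSpec.base ⟨p, hpprime⟩ := by
    have hnat := IsAffineOpen.SpecMap_appLE_fromSpec f V.2 Uj.2 hlej
    have hpt := congrArg (fun (g : Spec Γ(X, Uj.1) ⟶ Y) => g.base ⟨q, hq⟩) hnat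
    simp only [Scheme.Hom.comp_apply] at hpt
    have hcomap : (Spec.map (f.appLE V.1 Uj.1 hlej)).base ⟨q, hq⟩ = ⟨p, hpprime⟩ := by
      change PrimeSpectrum.comap (f.appLE _ _ _).hom _ = _
      refine PrimeSpectrum.ext ?_
      rw [PrimeSpectrum.comap_asIdeal]
    have hpt' := congrArg V.2.fromSpec.base hcomap
    exact hpt.symm.trans hpt'
  have hfxr : f.base xr = V.2.fromSpec.base ⟨p, hpprime⟩ := by
    have hnat := IsAffineOpen.SpecMap_appLE_fromSpec f V.2 U.2 hleU
    have hpt := congrArg (fun (g : Spec Γ(X, U.1) ⟶ Y) => g.base ⟨r, hrprime⟩) hnat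
    simp only [Scheme.Hom.comp_apply] at hpt
    have hcomap : (Spec.map (f.appLE V.1 U.1 hleU)).base ⟨r, hrprime⟩ = ⟨p, hpprime⟩ := by
      change PrimeSpectrum.comap (f.appLE _ _ _).hom _ = _
      refine PrimeSpectrum.ext ?_
      rw [PrimeSpectrum.comap_asIdeal]
      exact hrcomap
    have hpt' := congrArg V.2.fromSpec.base hcomap
    exact hpt.symm.trans hpt'
  have hxqr : xq = xr := hf (by rw [hfxq, hfxr])
  have hxqUj : xq ∈ Uj.1 := by
    show xq ∈ (Uj.1 : Set X)
    rw [← Uj.2.range_fromSpec]; exact Set.mem_range_self _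
  have hxqU : xq ∈ U.1 := by
    show xq ∈ (U.1 : Set X)
    rw [hxqr, ← U.2.range_fromSpec]; exact Set.mem_range_self _
  -- doubly basic neighborhood
  obtain ⟨g, g', hgg', hxg⟩ := exists_basicOpen_le_affine_inter Uj.2 U.2 xq ⟨hxqUj, hxqU⟩
  refine ⟨g, ?_, ?_⟩
  · -- g ∉ q
    have : (⟨q, hq⟩ : PrimeSpectrum Γ(X, Uj.1)) ∈ Uj.2.fromSpec ⁻¹ᵁ X.basicOpen g := hxg
    rw [Uj.2.fromSpec_preimage_basicOpen] at this
    exact this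
  · -- ∃ n, g ^ n * appLE a ∈ I.ideal Uj
    have hWaff : IsAffineOpen (X.basicOpen g) := Uj.2.basicOpen g
    set W : X.affineOpens := ⟨X.basicOpen g, hWaff⟩ with hWdef
    have hWUj : W.1 ≤ Uj.1 := X.basicOpen_le g
    have hWU : W.1 ≤ U.1 := by
      show (X.basicOpen g : X.Opens) ≤ U.1
      rw [hgg']; exact X.basicOpen_le g'
    have hWle : W.1 ≤ f ⁻¹ᵁ V.1 := hWUj.trans hlej
    have h1 : X.presheaf.map (homOfLE hWUj).op (f.appLE V.1 Uj.1 hlej a) =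
        f.appLE V.1 W.1 hWle a := appLE_res_apply f hlej hWUj hWle a
    have h2 : X.presheaf.map (homOfLE hWU).op (f.appLE V.1 U.1 hleU a) =
        f.appLE V.1 W.1 hWle a := appLE_res_apply f hleU hWU hWle a
    have hmem : f.appLE V.1 W.1 hWle a ∈ I.ideal W := by
      rw [I.map_eq U W hWU, ← h2]
      exact Ideal.mem_map_of_mem _ ha
    rw [I.map_eq Uj W hWUj] at hmem
    exact away_exists_pow_mul_mem (X.presheaf.map (homOfLE hWUj).op).hom g
      (Uj.2.isLocalization_of_eq_basicOpen g (homOfLE hWUj) rfl) (I.ideal Uj) _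
      (by rw [h1]; exact hmem)

end Core

section Core2

open AlgebraicGeometry

variable {X Y : Scheme.{u}}

/-- Aggregated version: some element of `M` multiplies `a` into `I` over `Uj`. -/
lemma exists_mul_mem_of_goodCover {f : X ⟶ Y} (hf : Function.Injective f.base)
    (I : QCohIdeal X) {V : Y.affineOpens} (U Uj : X.affineOpens)
    (hleU : U.1 ≤ f ⁻¹ᵁ V.1) (hlej : Uj.1 ≤ f ⁻¹ᵁ V.1)
    (M : Submonoid Γ(Y, V.1))
    (hM : @IsLocalization _ _ M Γ(X, U.1) _ (f.appLE V.1 U.1 hleU).hom.toAlgebra)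
    (a : Γ(Y, V.1)) (ha : f.appLE V.1 U.1 hleU a ∈ I.ideal U) :
    ∃ t ∈ M, f.appLE V.1 Uj.1 hlej (t * a) ∈ I.ideal Uj := by
  set φj : Γ(Y, V.1) →+* Γ(X, Uj.1) := (f.appLE V.1 Uj.1 hlej).hom with hφj
  set Q : Ideal Γ(X, Uj.1) :=
    Submodule.colon (I.ideal Uj) (Ideal.span {φj a}) with hQ
  set N' : Submonoid Γ(X, Uj.1) := M.map φj with hN'
  by_cases htop : Ideal.map (algebraMap Γ(X, Uj.1) (Localization N')) Q = ⊤
  · have h1 : (1 : Localization N') ∈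
        Ideal.map (algebraMap Γ(X, Uj.1) (Localization N')) Q := htop ▸ Submodule.mem_top
    rw [IsLocalization.mem_map_algebraMap_iff N'] at h1
    obtain ⟨⟨⟨i, hi⟩, s⟩, hs⟩ := h1
    have heq : algebraMap Γ(X, Uj.1) (Localization N') (s : Γ(X, Uj.1)) =
        algebraMap Γ(X, Uj.1) (Localization N') i := by
      rw [← hs, one_mul]
    obtain ⟨c, hc⟩ := IsLocalization.exists_of_eq (M := N') heq
    obtain ⟨t₁, ht₁M, ht₁⟩ := c.2
    obtain ⟨t₂, ht₂M, ht₂⟩ := s.2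
    refine ⟨t₁ * t₂, mul_mem ht₁M ht₂M, ?_⟩
    have hQmem : φj (t₁ * t₂) ∈ Q := by
      have : (c : Γ(X, Uj.1)) * (s : Γ(X, Uj.1)) ∈ Q := by
        rw [hc]; exact Ideal.mul_mem_left _ _ hi
      rw [map_mul, ht₁, ht₂]
      exact this
    have := Ideal.mem_colon_span_singleton.mp hQmem
    rw [← map_mul] at this
    rw [show t₁ * t₂ * a = (t₁ * t₂) * a from rfl]
    exact this
  · exfalso
    obtain ⟨m, hmmax, hm⟩ := Ideal.exists_le_maximal _ htop
    set q : Ideal Γ(X, Uj.1) := m.comap (algebraMap Γ(X, Uj.1) (Localization N')) with hq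
    haveI hqprime : q.IsPrime := Ideal.IsPrime.comap _ (hK := hmmax.isPrime)
    have hQq : Q ≤ q := le_trans Ideal.le_comap_map (Ideal.comap_mono hm)
    have hdisj : ∀ t ∈ M, φj t ∉ q := by
      intro t htM htq
      have hunit : IsUnit (algebraMap Γ(X, Uj.1) (Localization N') (φj t)) :=
        IsLocalization.map_units (M := N') _ ⟨φj t, ⟨t, htM, rfl⟩⟩
      exact hmmax.ne_top (Ideal.eq_top_of_isUnit_mem _ htq hunit)
    obtain ⟨g, hgq, n, hgn⟩ := exists_pow_mul_mem_of_prime hf I V U Uj hleU hlej M hM a ha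
      q hqprime hdisj
    have hgnQ : g ^ n ∈ Q := Ideal.mem_colon_span_singleton.mpr hgn
    exact hgq (hqprime.mem_of_pow_mem n (hQq hgnQ))

/-- `I(U) ⊆ (extIdeal)·Γ(X, U)` for localizing affine opens `U`. -/
lemma ideal_le_map_extIdeal {f : X ⟶ Y} [AlgebraicGeometry.IsNoetherian X]
    (hf : Function.Injective f.base) (I : QCohIdeal X)
    {V : Y.affineOpens} {𝒰 : Finset X.affineOpens} (h𝒰 : IsGoodCover f V 𝒰)
    (U : X.affineOpens) (hleU : U.1 ≤ f ⁻¹ᵁ V.1) (M : Submonoid Γ(Y, V.1))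
    (hM : @IsLocalization _ _ M Γ(X, U.1) _ (f.appLE V.1 U.1 hleU).hom.toAlgebra) :
    I.ideal U ≤ Ideal.map (f.appLE V.1 U.1 hleU).hom (extIdeal f I V) := by
  classical
  intro x hx
  letI := (f.appLE V.1 U.1 hleU).hom.toAlgebra
  haveI := hM
  have halg : algebraMap Γ(Y, V.1) Γ(X, U.1) = (f.appLE V.1 U.1 hleU).hom := rfl
  obtain ⟨⟨a, s⟩, hxa⟩ := IsLocalization.surj M x
  rw [halg] at hxa
  have ha : f.appLE V.1 U.1 hleU a ∈ I.ideal U := by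
    rw [show f.appLE V.1 U.1 hleU a = f.appLE V.1 U.1 hleU (a, s).1 from rfl, ← hxa]
    exact Ideal.mul_mem_right _ _ hx
  choose hle hloc using h𝒰.2
  have hch : ∀ Uj : {Uj // Uj ∈ 𝒰}, ∃ t ∈ M,
      f.appLE V.1 Uj.1.1 (hle Uj.1 Uj.2) (t * a) ∈ I.ideal Uj.1 := fun Uj =>
    exists_mul_mem_of_goodCover hf I U Uj.1 hleU (hle Uj.1 Uj.2) M hM a ha
  choose t htM ht using hch
  set T : Γ(Y, V.1) := ∏ Uj ∈ 𝒰.attach, t Uj with hT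
  have hTM : T ∈ M := Submonoid.prod_mem _ (fun Uj _ => htM Uj)
  have hTa : ∀ Uj ∈ 𝒰, ∀ hlej : Uj.1 ≤ f ⁻¹ᵁ V.1,
      f.appLE V.1 Uj.1 hlej (T * a) ∈ I.ideal Uj := by
    intro Uj hUj hlej
    have hsplit : T * a = (∏ Uk ∈ 𝒰.attach.erase ⟨Uj, hUj⟩, t Uk) * (t ⟨Uj, hUj⟩ * a) := by
      rw [hT, ← Finset.mul_prod_erase _ _ (Finset.mem_attach _ ⟨Uj, hUj⟩)]; ring
    rw [hsplit, map_mul]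
    exact Ideal.mul_mem_left _ _ (ht ⟨Uj, hUj⟩)
  have hmem : T * a ∈ extIdeal f I V :=
    mem_extIdeal_iff.mpr (fun U' hle' => goodCover_mem_all I h𝒰 _ hTa U' hle')
  have hunit : IsUnit (f.appLE V.1 U.1 hleU (T * s)) := by
    have := IsLocalization.map_units (M := M) Γ(X, U.1) ⟨T * (s : Γ(Y, V.1)), mul_mem hTM s.2⟩
    rwa [halg] at this
  obtain ⟨u, hu⟩ := hunit
  have heq : x * f.appLE V.1 U.1 hleU (T * s) = f.appLE V.1 U.1 hleU (T * a) := by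
    rw [map_mul, map_mul]
    calc x * (f.appLE V.1 U.1 hleU T * f.appLE V.1 U.1 hleU (s : Γ(Y, V.1)))
        = f.appLE V.1 U.1 hleU T * (x * f.appLE V.1 U.1 hleU (s : Γ(Y, V.1))) := by ring
      _ = f.appLE V.1 U.1 hleU T * f.appLE V.1 U.1 hleU a := by rw [hxa]
  have hxeq : x = f.appLE V.1 U.1 hleU (T * a) * (u⁻¹ : Γ(X, U.1)ˣ) := by
    rw [← heq, ← hu, mul_assoc, Units.mul_inv, mul_one]
  rw [hxeq]
  exact Ideal.mul_mem_right _ _ (Ideal.mem_map_of_mem _ hmem)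

/-- Main local statement : the extension ideal pulls back to `I` over every affine open. -/
lemma map_extIdeal_eq {f : X ⟶ Y} [AlgebraicGeometry.IsNoetherian X]
    (hf : Function.Injective f.base) (I : QCohIdeal X)
    {V : Y.affineOpens} {𝒰 : Finset X.affineOpens} (h𝒰 : IsGoodCover f V 𝒰)
    (U' : X.affineOpens) (hle' : U'.1 ≤ f ⁻¹ᵁ V.1) :
    Ideal.map (f.appLE V.1 U'.1 hle').hom (extIdeal f I V) = I.ideal U' := by
  apply le_antisymm
  · rw [Ideal.map_le_iff_le_comap]
    exact le_trans (iInf_le _ U') (iInf_le _ hle')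
  · intro c hc
    have hcv : ∀ x ∈ U'.1, ∃ U, U ∈ 𝒰 ∧ x ∈ U.1 := by
      intro x hx
      obtain ⟨U, hU, hxU⟩ := h𝒰.1 x (hle' hx)
      exact ⟨U, hU, hxU⟩
    obtain ⟨s, hs, hdb⟩ := exists_doubly_basic_cover U' (fun W => W ∈ 𝒰) hcv
    apply mem_of_span_eq_top_of_pow_mul_mem _ _ _ hs
    intro g' hg'
    obtain ⟨U, hU𝒰, g₂, hgg₂⟩ := hdb g' hg'
    have hWaff : IsAffineOpen (X.basicOpen g') := U'.2.basicOpen g'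
    set W : X.affineOpens := ⟨X.basicOpen g', hWaff⟩ with hWdef
    have hWU' : W.1 ≤ U'.1 := X.basicOpen_le g'
    have hWU : W.1 ≤ U.1 := by
      show (X.basicOpen g' : X.Opens) ≤ U.1
      rw [hgg₂]; exact X.basicOpen_le g₂
    obtain ⟨hleU, hlocU⟩ := h𝒰.2 U hU𝒰
    have hWle : W.1 ≤ f ⁻¹ᵁ V.1 := hWU.trans hleU
    have hresU : IsLocalizationHom (X.presheaf.map (homOfLE hWU).op).hom :=
      isLocalizationHom_res_of_eq_basicOpen U.2 g₂ hgg₂ hWU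
    have hWloc : IsLocalizationHom (f.appLE V.1 W.1 hWle).hom := by
      have := hlocU.comp hresU
      rwa [appLE_res_ringHom f hleU hWU hWle] at this
    obtain ⟨MW, hMW⟩ := hWloc
    have hWmem : X.presheaf.map (homOfLE hWU').op c ∈
        Ideal.map (f.appLE V.1 W.1 hWle).hom (extIdeal f I V) := by
      apply ideal_le_map_extIdeal hf I h𝒰 W hWle MW hMW
      rw [I.map_eq U' W hWU']
      exact Ideal.mem_map_of_mem _ hc
    have hcomp : Ideal.map (f.appLE V.1 W.1 hWle).hom (extIdeal f I V) =
        Ideal.map (X.presheaf.map (homOfLE hWU').op).hom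
          (Ideal.map (f.appLE V.1 U'.1 hle').hom (extIdeal f I V)) := by
      rw [Ideal.map_map, appLE_res_ringHom f hle' hWU' hWle]
    rw [hcomp] at hWmem
    exact away_exists_pow_mul_mem (X.presheaf.map (homOfLE hWU').op).hom g'
      (U'.2.isLocalization_of_eq_basicOpen g' (homOfLE hWU') rfl) _ c hWmem

end Core2

section Core3

open AlgebraicGeometry

variable {X Y : Scheme.{u}}

/-- Restriction maps the extension ideal into the extension ideal. -/
lemma res_mem_extIdeal {f : X ⟶ Y} {I : QCohIdeal X} {V V' : Y.affineOpens}
    (h : V'.1 ≤ V.1) {a : Γ(Y, V.1)} (ha : a ∈ extIdeal f I V) :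
    Y.presheaf.map (homOfLE h).op a ∈ extIdeal f I V' := by
  refine mem_extIdeal_iff.mpr fun U'' hle'' => ?_
  rw [res_appLE_apply f h hle'' (fun x hx => h (hle'' hx))]
  exact mem_extIdeal_iff.mp ha U'' _

lemma res_res_ringHom {Z : Scheme.{u}} {W₁ W₂ W₃ : Z.Opens}
    (h21 : W₂ ≤ W₁) (h32 : W₃ ≤ W₂) (h31 : W₃ ≤ W₁) :
    RingHom.comp (Z.presheaf.map (homOfLE h32).op).hom (Z.presheaf.map (homOfLE h21).op).hom =
        (Z.presheaf.map (homOfLE h31).op).hom := by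
  rw [← CommRingCat.hom_comp, ← Functor.map_comp]
  rfl

/-- Compatibility of the extension ideal with passage to basic opens. -/
lemma extIdeal_basicOpen {f : X ⟶ Y} [AlgebraicGeometry.IsNoetherian X]
    [AlgebraicGeometry.IsNoetherian Y]
    (hfl : IsLocalizingMorphism f) (_hf : Function.Injective f.base) (I : QCohIdeal X)
    (V : Y.affineOpens) (r : Γ(Y, V.1)) (D : Y.affineOpens) (hD : D.1 = Y.basicOpen r)
    (hle : D.1 ≤ V.1) :
    extIdeal f I D = Ideal.map (Y.presheaf.map (homOfLE hle).op).hom (extIdeal f I V) := by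
  classical
  set ρ : Γ(Y, V.1) →+* Γ(Y, D.1) := (Y.presheaf.map (homOfLE hle).op).hom with hρdef
  apply le_antisymm
  · intro b hb
    letI := ρ.toAlgebra
    haveI : IsLocalization (Submonoid.powers r) Γ(Y, D.1) :=
      V.2.isLocalization_of_eq_basicOpen r (homOfLE hle) hD
    have halg : algebraMap Γ(Y, V.1) Γ(Y, D.1) = ρ := rfl
    obtain ⟨⟨a, s⟩, hab⟩ := IsLocalization.surj (Submonoid.powers r) b
    rw [halg] at hab
    obtain ⟨𝒰, h𝒰⟩ := exists_isGoodCover hfl V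
    choose hlej hlocj using h𝒰.2
    have key : ∀ Uj : {Uj // Uj ∈ 𝒰}, ∃ m : ℕ,
        f.appLE V.1 Uj.1.1 (hlej Uj.1 Uj.2) (r ^ m * a) ∈ I.ideal Uj.1 := by
      rintro ⟨Uj, hUj⟩
      set g : Γ(X, Uj.1) := f.appLE V.1 Uj.1 (hlej Uj hUj) r with hgdef
      have hU'aff : IsAffineOpen (X.basicOpen g) := Uj.2.basicOpen g
      set U' : X.affineOpens := ⟨X.basicOpen g, hU'aff⟩ with hU'def
      have hU'Uj : U'.1 ≤ Uj.1 := X.basicOpen_le g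
      have hU'D : U'.1 ≤ f ⁻¹ᵁ D.1 := by
        rw [hD]
        show (X.basicOpen g : X.Opens) ≤ _
        rw [hgdef, Scheme.basicOpen_appLE]
        exact inf_le_right
      have hU'V : U'.1 ≤ f ⁻¹ᵁ V.1 := hU'Uj.trans (hlej Uj hUj)
      have h1 : X.presheaf.map (homOfLE hU'Uj).op (f.appLE V.1 Uj.1 (hlej Uj hUj) a) =
          f.appLE V.1 U'.1 hU'V a := appLE_res_apply f (hlej Uj hUj) hU'Uj hU'V a
      have h2 : f.appLE D.1 U'.1 hU'D (ρ a) = f.appLE V.1 U'.1 hU'V a :=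
        res_appLE_apply f hle hU'D hU'V a
      have hmem' : f.appLE D.1 U'.1 hU'D (ρ a) ∈ I.ideal U' := by
        rw [← hab, map_mul]
        exact Ideal.mul_mem_right _ _ (mem_extIdeal_iff.mp hb U' hU'D)
      rw [h2, ← h1, I.map_eq Uj U' hU'Uj] at hmem'
      obtain ⟨m, hm⟩ := away_exists_pow_mul_mem (X.presheaf.map (homOfLE hU'Uj).op).hom g
        (Uj.2.isLocalization_of_eq_basicOpen g (homOfLE hU'Uj) rfl) (I.ideal Uj) _ hmem'
      refine ⟨m, ?_⟩
      rw [map_mul, map_pow]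
      exact hm
    choose m hm using key
    set k : ℕ := ∑ Uj ∈ 𝒰.attach, m Uj with hkdef
    have hka : ∀ Uj ∈ 𝒰, ∀ hlej' : Uj.1 ≤ f ⁻¹ᵁ V.1,
        f.appLE V.1 Uj.1 hlej' (r ^ k * a) ∈ I.ideal Uj := by
      intro Uj hUj hlej'
      have hk : k = m ⟨Uj, hUj⟩ + ∑ Uk ∈ 𝒰.attach.erase ⟨Uj, hUj⟩, m Uk :=
        (Finset.add_sum_erase _ _ (Finset.mem_attach _ _)).symm
      have hsplit : r ^ k * a =
          r ^ (∑ Uk ∈ 𝒰.attach.erase ⟨Uj, hUj⟩, m Uk) * (r ^ (m ⟨Uj, hUj⟩) * a) := by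
        rw [hk, pow_add]; ring
      rw [hsplit, map_mul]
      exact Ideal.mul_mem_left _ _ (hm ⟨Uj, hUj⟩)
    have hmemV : r ^ k * a ∈ extIdeal f I V :=
      mem_extIdeal_iff.mpr (fun U'' hle'' => goodCover_mem_all I h𝒰 _ hka U'' hle'')
    have hunit : IsUnit (ρ (r ^ k * s)) := by
      have := IsLocalization.map_units (M := Submonoid.powers r) Γ(Y, D.1)
        ⟨r ^ k * (s : Γ(Y, V.1)), mul_mem (pow_mem (Submonoid.mem_powers r) k) s.2⟩
      rwa [halg] at this
    obtain ⟨u, hu⟩ := hunit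
    have heq : b * ρ (r ^ k * s) = ρ (r ^ k * a) := by
      rw [map_mul, map_mul]
      calc b * (ρ (r ^ k) * ρ (s : Γ(Y, V.1)))
          = ρ (r ^ k) * (b * ρ (s : Γ(Y, V.1))) := by ring
        _ = ρ (r ^ k) * ρ a := by rw [hab]
    have hbe : b = ρ (r ^ k * a) * (u⁻¹ : Γ(Y, D.1)ˣ) := by
      rw [← heq, ← hu, mul_assoc, Units.mul_inv, mul_one]
    rw [hbe]
    exact Ideal.mul_mem_right _ _ (Ideal.mem_map_of_mem _ hmemV)
  · rw [Ideal.map_le_iff_le_comap]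
    intro a ha
    exact res_mem_extIdeal hle ha

/-- Quasi-coherence of the extension ideal. -/
lemma extIdeal_map_eq {f : X ⟶ Y} [AlgebraicGeometry.IsNoetherian X]
    [AlgebraicGeometry.IsNoetherian Y]
    (hfl : IsLocalizingMorphism f) (hf : Function.Injective f.base) (I : QCohIdeal X)
    (V V' : Y.affineOpens) (h : V'.1 ≤ V.1) :
    extIdeal f I V' = Ideal.map (Y.presheaf.map (homOfLE h).op).hom (extIdeal f I V) := by
  apply le_antisymm
  · intro b hb
    have hcv : ∀ y ∈ V'.1, ∃ W, V = W ∧ y ∈ W.1 := fun y hy => ⟨V, rfl, h hy⟩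
    obtain ⟨s, hs, hdb⟩ := exists_doubly_basic_cover V' (fun W => V = W) hcv
    apply mem_of_span_eq_top_of_pow_mul_mem _ _ _ hs
    intro h' hh'
    obtain ⟨W, rfl, h₂, hbas⟩ := hdb h' hh'
    have hDaff : IsAffineOpen (Y.basicOpen h') := V'.2.basicOpen h'
    set D : Y.affineOpens := ⟨Y.basicOpen h', hDaff⟩ with hDdef
    have hDV' : D.1 ≤ V'.1 := Y.basicOpen_le h'
    have hDV : D.1 ≤ V.1 := by
      show (Y.basicOpen h' : Y.Opens) ≤ V.1
      rw [hbas]; exact Y.basicOpen_le h₂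
    -- two descriptions of extIdeal f I D
    have e1 : extIdeal f I D =
        Ideal.map (Y.presheaf.map (homOfLE hDV').op).hom (extIdeal f I V') :=
      extIdeal_basicOpen hfl hf I V' h' D rfl hDV'
    have e2 : extIdeal f I D =
        Ideal.map (Y.presheaf.map (homOfLE hDV).op).hom (extIdeal f I V) :=
      extIdeal_basicOpen hfl hf I V h₂ D hbas hDV
    have hmem : Y.presheaf.map (homOfLE hDV').op b ∈ extIdeal f I D :=
      res_mem_extIdeal hDV' hb
    rw [e2, ← res_res_ringHom h hDV' hDV, ← Ideal.map_map] at hmem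
    exact away_exists_pow_mul_mem (Y.presheaf.map (homOfLE hDV').op).hom h'
      (V'.2.isLocalization_of_eq_basicOpen h' (homOfLE hDV') rfl) _ b hmem
  · rw [Ideal.map_le_iff_le_comap]
    intro a ha
    exact res_mem_extIdeal h ha

end Core3

/-- Every coherent ideal sheaf on the source of a localizing immersion of noetherian schemes
extends to a coherent ideal sheaf on the target: there is an ideal sheaf `J` on `Y` with
`J·O_X = I`. -/
theorem isLocalizingImmersion_ideal_extension
    {X Y : Scheme.{u}} [IsNoetherian X] [IsNoetherian Y] (f : X ⟶ Y)
    (hf : IsLocalizingImmersion f) (I : QCohIdeal X) :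
    ∃ J : QCohIdeal Y,
      ∀ (V : Y.affineOpens) (U : X.affineOpens) (hle : U.1 ≤ f ⁻¹ᵁ V.1),
        Ideal.map (f.appLE V.1 U.1 hle).hom (J.ideal V) = I.ideal U := by
  obtain ⟨hfl, hinj⟩ := hf
  refine ⟨⟨fun V => extIdeal f I V, fun V V' hVV' => extIdeal_map_eq hfl hinj I V V' hVV'⟩, ?_⟩
  intro V U hle
  obtain ⟨𝒰, h𝒰⟩ := exists_isGoodCover hfl V
  exact map_extIdeal_eq hinj I h𝒰 U hle
end

section
/- A morphism of noetherian schemes is a localizing immersion if and only if it is a localizing morphism that is a monomorphism in the category of schemes. -/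
/-! Formalization of a statement from "Compactification for essentially finite-type maps"
(S. Nayak). All schemes are noetherian where stated. -/

open AlgebraicGeometry CategoryTheory CategoryTheory.Limits TopologicalSpace Opposite

universe u

private lemma epi_of_isLocalizationHom' {R S : CommRingCat.{u}} (φ : R ⟶ S)
    (h : IsLocalizationHom φ.hom) : Epi φ := by
  obtain ⟨M, hM⟩ := h
  letI := φ.hom.toAlgebra
  constructor
  intro T a b e
  apply CommRingCat.hom_ext
  exact IsLocalization.ringHom_ext (S := S) M (congrArg CommRingCat.Hom.hom e)

private lemma mono_specMap' {R S : CommRingCat.{u}} (φ : R ⟶ S) [Epi φ] :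
    Mono (Spec.map φ) := by
  haveI : Mono φ.op := inferInstance
  haveI : (Scheme.Spec).IsRightAdjoint := ⟨_, ⟨ΓSpec.adjunction⟩⟩
  show Mono (Scheme.Spec.map φ.op)
  infer_instance

private lemma mono_of_epi_appTop' {X Y : Scheme.{u}} [IsAffine X] [IsAffine Y] (f : X ⟶ Y)
    (h : Epi f.appTop) : Mono f := by
  haveI := mono_specMap' f.appTop
  rw [show f = X.isoSpec.hom ≫ Spec.map f.appTop ≫ Y.isoSpec.inv by
    rw [← Category.assoc, Scheme.isoSpec_hom_naturality, Category.assoc, Iso.hom_inv_id,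
      Category.comp_id]]
  infer_instance

private lemma mono_ι_comp' {X Y : Scheme.{u}} (f : X ⟶ Y) (V : Y.affineOpens)
    (U : X.affineOpens) (hle : U.1 ≤ f ⁻¹ᵁ V.1)
    (h : IsLocalizationHom (f.appLE V.1 U.1 hle).hom) : Mono (U.1.ι ≫ f) := by
  haveI : IsAffine U.1.toScheme := U.2
  haveI : IsAffine V.1.toScheme := V.2
  have hepi : Epi (f.appLE V.1 U.1 hle) := epi_of_isLocalizationHom' _ h
  have hepi' : (MorphismProperty.epimorphisms CommRingCat.{u})
      ((f.resLE V.1 U.1 hle).appTop) := by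
    rw [(MorphismProperty.epimorphisms CommRingCat.{u}).arrow_mk_iso_iff
      (arrowResLEAppIso f V.1 U.1 hle)]
    exact hepi
  haveI : Mono (f.resLE V.1 U.1 hle) := mono_of_epi_appTop' _ hepi'
  rw [← Scheme.Hom.resLE_comp_ι f hle]
  exact mono_comp _ _

private theorem mono_of_isLocalizingMorphism_of_injective {X Y : Scheme.{u}} (f : X ⟶ Y)
    (hloc : IsLocalizingMorphism f) (hinj : Function.Injective f.base) : Mono f := by
  refine ⟨fun {T} g h hgh => ?_⟩
  have hbase : ∀ t : T, g.base t = h.base t := fun t => hinj (by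
    rw [← Scheme.Hom.comp_apply, ← Scheme.Hom.comp_apply, hgh])
  have key : ∀ t : T, ∃ W : T.Opens, t ∈ W ∧ W.ι ≫ g = W.ι ≫ h := by
    intro t
    obtain ⟨V, hyV, 𝒰, hcov, hl⟩ := hloc (f.base (g.base t))
    obtain ⟨U, hU𝒰, hxU⟩ := hcov (g.base t) hyV
    obtain ⟨hle, hlocHom⟩ := hl U hU𝒰
    refine ⟨g ⁻¹ᵁ U.1, hxU, ?_⟩
    haveI := mono_ι_comp' f V U hle hlocHom
    have hrg : Set.range ((g ⁻¹ᵁ U.1).ι ≫ g).base ⊆ Set.range U.1.ι.base := by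
      rw [Scheme.Opens.range_ι, Scheme.Hom.comp_base, TopCat.coe_comp, Set.range_comp,
        Scheme.Opens.range_ι]
      rintro _ ⟨x, hx, rfl⟩
      exact hx
    have hrh : Set.range ((g ⁻¹ᵁ U.1).ι ≫ h).base ⊆ Set.range U.1.ι.base := by
      rw [Scheme.Opens.range_ι, Scheme.Hom.comp_base, TopCat.coe_comp, Set.range_comp,
        Scheme.Opens.range_ι]
      rintro _ ⟨x, hx, rfl⟩
      rw [← hbase]
      exact hx
    have hab : IsOpenImmersion.lift U.1.ι _ hrg = IsOpenImmersion.lift U.1.ι _ hrh := by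
      rw [← cancel_mono (U.1.ι ≫ f), ← Category.assoc, ← Category.assoc,
        IsOpenImmersion.lift_fac, IsOpenImmersion.lift_fac, Category.assoc, Category.assoc, hgh]
    calc (g ⁻¹ᵁ U.1).ι ≫ g = IsOpenImmersion.lift U.1.ι _ hrg ≫ U.1.ι :=
          (IsOpenImmersion.lift_fac _ _ hrg).symm
      _ = IsOpenImmersion.lift U.1.ι _ hrh ≫ U.1.ι := by rw [hab]
      _ = (g ⁻¹ᵁ U.1).ι ≫ h := IsOpenImmersion.lift_fac _ _ hrh
  choose W hmem hW using key
  refine (T.openCoverOfIsOpenCover W ?_).hom_ext g h fun t => hW t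
  rw [IsOpenCover, eq_top_iff]
  exact fun t _ => Opens.mem_iSup.mpr ⟨t, hmem t⟩

/-- A morphism of noetherian schemes is a localizing immersion iff it is a localizing morphism
that is a monomorphism in the category of schemes. -/
theorem isLocalizingImmersion_iff_isLocalizingMorphism_and_mono
    {X Y : Scheme.{u}} [IsNoetherian X] [IsNoetherian Y] (f : X ⟶ Y) :
    IsLocalizingImmersion f ↔ IsLocalizingMorphism f ∧ Mono f := by
  constructor
  · rintro ⟨hloc, hinj⟩
    exact ⟨hloc, mono_of_isLocalizingMorphism_of_injective f hloc hinj⟩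
  · rintro ⟨hloc, hmono⟩
    exact ⟨hloc, f.injective⟩
end
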